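/- arXiv:2101.05222 — 3 statements merged into one kernel-verified Lean document; each statement's English description precedes it below -/
import Mathlib

section
/- (Key renewal theorem, arithmetic case.) Let (p_j)_{j≥0} be a probability mass function on the nonneganive integers with p₀ = 0 and gcd{j : p_j > 0} = 1, and let u_m := Σ_{k≥0} p^{*k}(m), where p^{*k}(m) = P(T₁ + ⋯ + T_k = m) for i.i.d. random variables T_j with mass function p. If (b_n)_{n≥0} is a summable sequence of non-negative reals, then the sequence a_n := Σ_{m=0}^{n} b_{n−m} u_m satisfies lim_{n→∞} a_n = (Σ_{m≥0} b_m) / (Σ_{j≥0} j p_j), where the limit is interpreted as 0 when Σ_{j≥0} j p_j = ∞. -/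
open Filter Finset
open scoped ENNReal Topology

noncomputable section

/-- Convolution of two sequences on ℕ. -/
def seqConv (p q : ℕ → ℝ) (m : ℕ) : ℝ := ∑ j ∈ Finset.range (m + 1), p j * q (m - j)

/-- `convPow p k` is the `k`-fold convolution power `p^{*k}` of `p`
(with `p^{*0} = δ₀`); `p^{*k}(m)` is the probability that a sum of `k` i.i.d.
`p`-distributed random variables equals `m`. -/
def convPow (p : ℕ → ℝ) : ℕ → ℕ → ℝ
  | 0, m => if m = 0 then 1 else 0
  | (k + 1), m => seqConv p (convPow p k) m

lemma convPow_succ_def (p : ℕ → ℝ) (k m : ℕ) :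
    convPow p (k+1) m = ∑ j ∈ Finset.range (m+1), p j * convPow p k (m - j) := rfl

lemma convPow_nonneg {p : ℕ → ℝ} (hpnn : ∀ j, 0 ≤ p j) :
    ∀ k m, 0 ≤ convPow p k m := by
  intro k
  induction k with
  | zero =>
    intro m
    unfold convPow
    split <;> norm_num
  | succ k ih =>
    intro m
    rw [convPow_succ_def]
    exact Finset.sum_nonneg fun j _ => mul_nonneg (hpnn j) (ih _)

lemma convPow_eq_zero {p : ℕ → ℝ} (hp0 : p 0 = 0) :
    ∀ k m, m < k → convPow p k m = 0 := by
  intro k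
  induction k with
  | zero => exact fun m hm => absurd hm (Nat.not_lt_zero m)
  | succ k ih =>
    intro m hm
    rw [convPow_succ_def]
    refine Finset.sum_eq_zero fun j hj => ?_
    have hj' : j ≤ m := by simpa [Nat.lt_succ_iff] using Finset.mem_range.mp hj
    rcases Nat.eq_zero_or_pos j with h0 | h1
    · rw [h0, hp0, zero_mul]
    · rw [ih (m - j) (by omega), mul_zero]

/-- numerical semigroup lemma -/
lemma closure_gcd (F : Finset ℕ) :
    ∃ N : ℕ, ∀ n, N ≤ n → F.gcd id ∣ n → n ∈ AddSubmonoid.closure (F : Set ℕ) := by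
  classical
  induction F using Finset.induction_on with
  | empty =>
    refine ⟨1, fun n hn hdvd => ?_⟩
    rw [Finset.gcd_empty] at hdvd
    rw [zero_dvd_iff] at hdvd
    omega
  | @insert a F haF ih =>
    obtain ⟨N, hN⟩ := ih
    set d := F.gcd id with hd
    refine ⟨N + d * a + 1, fun n hn hdvd => ?_⟩
    have hmono : AddSubmonoid.closure (F : Set ℕ) ≤
        AddSubmonoid.closure ((insert a F : Finset ℕ) : Set ℕ) :=
      AddSubmonoid.closure_mono (by simp [Finset.coe_subset, Finset.subset_insert])
    have hamem : a ∈ AddSubmonoid.closure ((insert a F : Finset ℕ) : Set ℕ) :=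
      AddSubmonoid.subset_closure (by simp)
    have hgcd_eq : (insert a F).gcd id = Nat.gcd a d := by
      rw [Finset.gcd_insert]; rfl
    rw [hgcd_eq] at hdvd
    by_cases hd0 : d = 0
    · rw [hd0, Nat.gcd_zero_right] at hdvd
      have ha0 : a ≠ 0 := by
        rintro rfl
        rw [zero_dvd_iff] at hdvd
        omega
      obtain ⟨c, rfl⟩ := hdvd
      have : a * c = c • a := by rw [smul_eq_mul, mul_comm]
      rw [this]
      exact AddSubmonoid.nsmul_mem _ hamem c
    · have hdpos : 0 < d := Nat.pos_of_ne_zero hd0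
      set g := Nat.gcd a d with hg
      have hgn : g ∣ n := hdvd
      have hbez : (g : ℤ) = a * Nat.gcdA a d + d * Nat.gcdB a d := Nat.gcd_eq_gcd_ab a d
      set x0 : ℤ := Nat.gcdA a d * (n / g : ℕ) with hx0
      have hng : (n : ℤ) = (g : ℤ) * ((n / g : ℕ) : ℤ) := by
        exact_mod_cast (Nat.mul_div_cancel' hgn).symm
      have key0 : (d : ℤ) ∣ (n : ℤ) - a * x0 := by
        refine ⟨Nat.gcdB a d * ((n / g : ℕ) : ℤ), ?_⟩
        rw [hng, hbez]; ring
      have hdZ : (0:ℤ) < (d : ℤ) := by exact_mod_cast hdpos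
      set x : ℕ := (x0 % (d:ℤ)).toNat with hx
      have hx0d : (x : ℤ) = x0 % (d:ℤ) := Int.toNat_of_nonneg (Int.emod_nonneg x0 (ne_of_gt hdZ))
      have hxlt : x < d := by
        have h1 := Int.emod_lt_of_pos x0 hdZ
        have h2 : (x:ℤ) < (d:ℤ) := by rw [hx0d]; exact h1
        exact_mod_cast h2
      have key : (d : ℤ) ∣ (n : ℤ) - a * x := by
        have h2 : (d:ℤ) ∣ x0 - (x:ℤ) := by
          rw [hx0d]
          refine ⟨x0 / d, ?_⟩
          rw [Int.emod_def]; ring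
        have h3 : (n:ℤ) - a * x = ((n:ℤ) - a * x0) + a * (x0 - x) := by ring
        rw [h3]
        exact dvd_add key0 (Dvd.dvd.mul_left h2 a)
      have hxa_le : x * a ≤ n := by
        have h1 : x * a ≤ d * a := Nat.mul_le_mul_right a hxlt.le
        omega
      set m := n - x * a with hm
      have hmN : N ≤ m := by
        have h1 : x * a ≤ d * a := Nat.mul_le_mul_right a hxlt.le
        omega
      have hmZ : (m : ℤ) = (n:ℤ) - (a:ℤ) * (x:ℤ) := by
        have : (m : ℤ) = (n : ℤ) - ((x * a : ℕ) : ℤ) := by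
          rw [hm]; exact_mod_cast Int.ofNat_sub hxa_le
        rw [this]; push_cast; ring
      have hdm : d ∣ m := by
        have h4 : (d:ℤ) ∣ (m:ℤ) := by rw [hmZ]; exact key
        exact_mod_cast h4
      have hmmem := hmono (hN m hmN hdm)
      have hn_eq : n = x • a + m := by rw [smul_eq_mul]; omega
      rw [hn_eq]
      exact AddSubmonoid.add_mem _ (AddSubmonoid.nsmul_mem _ hamem x) hmmem


lemma exists_subseq_tendsto_of_frequently {u : ℕ → ℝ} {c : ℝ}
    (h : ∀ ε : ℝ, 0 < ε → ∃ᶠ n in atTop, |u n - c| < ε) :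
    ∃ φ : ℕ → ℕ, StrictMono φ ∧ Tendsto (fun j => u (φ j)) atTop (𝓝 c) := by
  obtain ⟨φ, hφ, hφ2⟩ := extraction_forall_of_frequently
    (fun k : ℕ => h (1 / (k+1)) (by positivity))
  refine ⟨φ, hφ, ?_⟩
  rw [tendsto_iff_dist_tendsto_zero]
  refine squeeze_zero (fun j => dist_nonneg) (fun j => ?_)
    tendsto_one_div_add_atTop_nhds_zero_nat
  rw [Real.dist_eq]
  exact (hφ2 j).le

lemma claim_limsup
    {p u : ℕ → ℝ} {L : ℝ}
    (hpnn : ∀ j, 0 ≤ p j) (hp0 : p 0 = 0) (hpsum : HasSum p 1)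
    (hrec : ∀ n, 1 ≤ n → u n = ∑ j ∈ Finset.range (n+1), p j * u (n - j))
    (hunn : ∀ n, 0 ≤ u n) (hule : ∀ n, u n ≤ 1)
    (hL : L = limsup u atTop) (hLnn : 0 ≤ L)
    {i : ℕ} (hi : 0 < p i)
    {φ : ℕ → ℕ} (hφ : Tendsto φ atTop atTop)
    (hφu : Tendsto (fun j => u (φ j)) atTop (𝓝 L)) :
    Tendsto (fun j => u (φ j - i)) atTop (𝓝 L) := by
  have hbdd : IsBoundedUnder (· ≤ ·) atTop u := isBoundedUnder_of ⟨1, hule⟩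
  have hpi1 : p i ≤ 1 := le_hasSum hpsum i fun j _ => hpnn j
  have hi0 : i ≠ 0 := by
    rintro rfl
    rw [hp0] at hi
    exact lt_irrefl 0 hi
  refine Metric.tendsto_nhds.mpr fun δ hδ => ?_
  set ε := δ * p i / 3 with hε
  have hε0 : 0 < ε := by positivity
  -- eventually u n < L + ε
  have hev1 : ∀ᶠ n in atTop, u n < L + ε :=
    eventually_lt_of_limsup_lt (by rw [← hL]; linarith) hbdd
  obtain ⟨K, hK⟩ := eventually_atTop.mp hev1
  -- choose M
  have hps : Tendsto (fun n => ∑ j ∈ Finset.range n, p j) atTop (𝓝 1) :=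
    hpsum.tendsto_sum_nat
  obtain ⟨M0, hM0⟩ := eventually_atTop.mp
    (hps.eventually (eventually_gt_nhds (by linarith : (1:ℝ) - ε < 1)))
  set M := max M0 i with hM
  have hiM : i ≤ M := le_max_right _ _
  have hMsum : 1 - ε < ∑ j ∈ Finset.range (M+1), p j := hM0 (M+1) (by omega)
  filter_upwards [hφ.eventually_ge_atTop (K + M + 1),
    Metric.tendsto_nhds.mp hφu ε hε0] with j hj1 hj2
  set n := φ j with hn
  have hsmall : ∀ m, m ≤ M → u (n - m) < L + ε := fun m hm => hK (n - m) (by omega)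
  have hrecn := hrec n (by omega)
  have hsplit : ∑ m ∈ Finset.range (n+1), p m * u (n - m)
      = ∑ m ∈ Finset.range (M+1), p m * u (n-m)
        + ∑ m ∈ Finset.Ico (M+1) (n+1), p m * u (n-m) := by
    simp only [Finset.range_eq_Ico]
    exact (Finset.sum_Ico_consecutive _ (Nat.zero_le _) (by omega : M+1 ≤ n+1)).symm
  have hpsum_le : ∀ s : Finset ℕ, ∑ j ∈ s, p j ≤ 1 :=
    fun s => sum_le_hasSum s (fun j _ => hpnn j) hpsum
  have htail : ∑ m ∈ Finset.Ico (M+1) (n+1), p m * u (n-m) ≤ ε := by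
    have h1 : ∑ m ∈ Finset.Ico (M+1) (n+1), p m * u (n-m)
        ≤ ∑ m ∈ Finset.Ico (M+1) (n+1), p m :=
      Finset.sum_le_sum fun m _ => mul_le_of_le_one_right (hpnn m) (hule _)
    have h2 : ∑ m ∈ Finset.range (M+1), p m + ∑ m ∈ Finset.Ico (M+1) (n+1), p m
        = ∑ m ∈ Finset.range (n+1), p m := by
      simp only [Finset.range_eq_Ico]
      exact Finset.sum_Ico_consecutive _ (Nat.zero_le _) (by omega)
    have h3 := hpsum_le (Finset.range (n+1))
    linarith
  have hiM' : i ∈ Finset.range (M+1) := Finset.mem_range.mpr (by omega)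
  have hsep : ∑ m ∈ Finset.range (M+1), p m * u (n-m)
      = p i * u (n-i) + ∑ m ∈ (Finset.range (M+1)).erase i, p m * u (n-m) :=
    (Finset.add_sum_erase _ _ hiM').symm
  have hLε : 0 ≤ L + ε := by linarith
  have herase_le : ∑ m ∈ (Finset.range (M+1)).erase i, p m * u (n-m)
      ≤ (1 - p i) * (L + ε) := by
    have h1 : ∑ m ∈ (Finset.range (M+1)).erase i, p m * u (n-m)
        ≤ ∑ m ∈ (Finset.range (M+1)).erase i, p m * (L + ε) := by
      refine Finset.sum_le_sum fun m hm => ?_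
      have hmM : m ≤ M := by
        have := Finset.mem_range.mp (Finset.mem_of_mem_erase hm)
        omega
      exact mul_le_mul_of_nonneg_left (hsmall m hmM).le (hpnn m)
    have h2 : ∑ m ∈ (Finset.range (M+1)).erase i, p m
        = ∑ m ∈ Finset.range (M+1), p m - p i := Finset.sum_erase_eq_sub hiM'
    have h3 := hpsum_le (Finset.range (M+1))
    have h4 : ∑ m ∈ (Finset.range (M+1)).erase i, p m * (L + ε)
        = (∑ m ∈ (Finset.range (M+1)).erase i, p m) * (L + ε) := by
      rw [Finset.sum_mul]
    have h5 : (∑ m ∈ (Finset.range (M+1)).erase i, p m) * (L + ε)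
        ≤ (1 - p i) * (L + ε) := by
      apply mul_le_mul_of_nonneg_right _ hLε
      rw [h2]; linarith
    linarith
  have hlow : L - ε < u n := by
    rw [Real.dist_eq] at hj2
    have := abs_lt.mp hj2
    linarith [this.1]
  have hmain : L - ε < p i * u (n-i) + (1 - p i)*(L+ε) + ε := by
    rw [hrecn, hsplit, hsep] at hlow
    linarith
  have hkey : L - 3*ε/(p i) < u (n - i) := by
    have h3 : p i * (L - 3*ε/p i) < p i * u (n-i) := by
      have hcanc : p i * (3*ε/p i) = 3*ε := by
        field_simp
      nlinarith [hmain]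
    exact lt_of_mul_lt_mul_left h3 (hpnn i)
  have hεδ : 3*ε/p i = δ := by
    rw [hε]; field_simp
  have hub : u (n - i) < L + ε := hsmall i hiM
  rw [Real.dist_eq, abs_lt]
  constructor
  · nlinarith
  · nlinarith

lemma claim_liminf
    {p u : ℕ → ℝ} {l : ℝ}
    (hpnn : ∀ j, 0 ≤ p j) (hp0 : p 0 = 0) (hpsum : HasSum p 1)
    (hrec : ∀ n, 1 ≤ n → u n = ∑ j ∈ Finset.range (n+1), p j * u (n - j))
    (hunn : ∀ n, 0 ≤ u n) (hule : ∀ n, u n ≤ 1)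
    (hl : l = liminf u atTop) (hlnn : 0 ≤ l) (hl1 : l ≤ 1)
    {i : ℕ} (hi : 0 < p i)
    {φ : ℕ → ℕ} (hφ : Tendsto φ atTop atTop)
    (hφu : Tendsto (fun j => u (φ j)) atTop (𝓝 l)) :
    Tendsto (fun j => u (φ j - i)) atTop (𝓝 l) := by
  have hbdd : IsBoundedUnder (· ≥ ·) atTop u := isBoundedUnder_of ⟨0, hunn⟩
  have hpi1 : p i ≤ 1 := le_hasSum hpsum i fun j _ => hpnn j
  have hi0 : i ≠ 0 := by
    rintro rfl
    rw [hp0] at hi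
    exact lt_irrefl 0 hi
  refine Metric.tendsto_nhds.mpr fun δ hδ => ?_
  set ε := min 1 (δ * p i / 3) with hε
  have hε0 : 0 < ε := lt_min one_pos (by positivity)
  have hε1 : ε ≤ 1 := min_le_left _ _
  have hεδ : 3*ε/p i ≤ δ := by
    have h1 : ε ≤ δ * p i / 3 := min_le_right _ _
    rw [div_le_iff₀ hi]
    nlinarith
  -- eventually u n > l - ε
  have hev1 : ∀ᶠ n in atTop, l - ε < u n :=
    eventually_lt_of_lt_liminf (by rw [← hl]; linarith) hbdd
  obtain ⟨K, hK⟩ := eventually_atTop.mp hev1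
  have hps : Tendsto (fun n => ∑ j ∈ Finset.range n, p j) atTop (𝓝 1) :=
    hpsum.tendsto_sum_nat
  obtain ⟨M0, hM0⟩ := eventually_atTop.mp
    (hps.eventually (eventually_gt_nhds (by linarith : (1:ℝ) - ε < 1)))
  set M := max M0 i with hM
  have hiM : i ≤ M := le_max_right _ _
  have hMsum : 1 - ε < ∑ j ∈ Finset.range (M+1), p j := hM0 (M+1) (by omega)
  filter_upwards [hφ.eventually_ge_atTop (K + M + 1),
    Metric.tendsto_nhds.mp hφu ε hε0] with j hj1 hj2
  set n := φ j with hn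
  have hbig : ∀ m, m ≤ M → l - ε < u (n - m) := fun m hm => hK (n - m) (by omega)
  have hrecn := hrec n (by omega)
  have hsplit : ∑ m ∈ Finset.range (n+1), p m * u (n - m)
      = ∑ m ∈ Finset.range (M+1), p m * u (n-m)
        + ∑ m ∈ Finset.Ico (M+1) (n+1), p m * u (n-m) := by
    simp only [Finset.range_eq_Ico]
    exact (Finset.sum_Ico_consecutive _ (Nat.zero_le _) (by omega : M+1 ≤ n+1)).symm
  have hpsum_le : ∀ s : Finset ℕ, ∑ j ∈ s, p j ≤ 1 :=
    fun s => sum_le_hasSum s (fun j _ => hpnn j) hpsum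
  have htail : 0 ≤ ∑ m ∈ Finset.Ico (M+1) (n+1), p m * u (n-m) :=
    Finset.sum_nonneg fun m _ => mul_nonneg (hpnn m) (hunn _)
  have hiM' : i ∈ Finset.range (M+1) := Finset.mem_range.mpr (by omega)
  have hsep : ∑ m ∈ Finset.range (M+1), p m * u (n-m)
      = p i * u (n-i) + ∑ m ∈ (Finset.range (M+1)).erase i, p m * u (n-m) :=
    (Finset.add_sum_erase _ _ hiM').symm
  have herase_ge : (∑ m ∈ (Finset.range (M+1)).erase i, p m) * (l - ε)
      ≤ ∑ m ∈ (Finset.range (M+1)).erase i, p m * u (n-m) := by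
    rw [Finset.sum_mul]
    refine Finset.sum_le_sum fun m hm => ?_
    have hmM : m ≤ M := by
      have := Finset.mem_range.mp (Finset.mem_of_mem_erase hm)
      omega
    exact mul_le_mul_of_nonneg_left (hbig m hmM).le (hpnn m)
  set A := ∑ m ∈ (Finset.range (M+1)).erase i, p m with hA
  have hAub : A ≤ 1 - p i := by
    have h2 : A = ∑ m ∈ Finset.range (M+1), p m - p i := Finset.sum_erase_eq_sub hiM'
    have h3 := hpsum_le (Finset.range (M+1))
    linarith
  have hAlb : 1 - ε - p i ≤ A := by
    have h2 : A = ∑ m ∈ Finset.range (M+1), p m - p i := Finset.sum_erase_eq_sub hiM'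
    linarith
  have hup2 : u n < l + ε := by
    rw [Real.dist_eq] at hj2
    have := abs_lt.mp hj2
    linarith [this.2]
  have hmain : p i * u (n-i) < l + ε - A * (l - ε) := by
    rw [hrecn, hsplit, hsep] at hup2
    linarith
  have hmain2 : p i * u (n-i) < p i * l + 3*ε := by
    rcases le_or_gt 0 (l - ε) with hc | hc
    · have hb : (1 - ε - p i) * (l - ε) ≤ A * (l - ε) :=
        mul_le_mul_of_nonneg_right hAlb hc
      nlinarith
    · have hb : (1 - p i) * (l - ε) ≤ A * (l - ε) :=
        mul_le_mul_of_nonpos_right hAub hc.le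
      nlinarith
  have hkey : u (n - i) < l + 3*ε/p i := by
    have hcanc : p i * (l + 3*ε/p i) = p i * l + 3*ε := by
      field_simp
    refine lt_of_mul_lt_mul_left ?_ (hpnn i)
    rw [hcanc]
    exact hmain2
  have hlb : l - ε < u (n - i) := hbig i hiM
  have hεle : ε ≤ δ := by
    have h1 : ε ≤ δ * p i / 3 := min_le_right _ _
    nlinarith
  rw [Real.dist_eq, abs_lt]
  constructor
  · linarith
  · linarith


def rTail (p : ℕ → ℝ) (k : ℕ) : ℝ := 1 - ∑ j ∈ Finset.range (k+1), p j

lemma rTail_nonneg {p : ℕ → ℝ} (hpnn : ∀ j, 0 ≤ p j) (hpsum : HasSum p 1) (k : ℕ) :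
    0 ≤ rTail p k := by
  have := sum_le_hasSum (Finset.range (k+1)) (fun j _ => hpnn j) hpsum
  simp only [rTail]
  linarith

lemma rTail_le_one {p : ℕ → ℝ} (hpnn : ∀ j, 0 ≤ p j) (k : ℕ) : rTail p k ≤ 1 := by
  have : (0:ℝ) ≤ ∑ j ∈ Finset.range (k+1), p j :=
    Finset.sum_nonneg fun j _ => hpnn j
  simp only [rTail]
  linarith

lemma rTail_zero {p : ℕ → ℝ} (hp0 : p 0 = 0) : rTail p 0 = 1 := by
  simp [rTail, hp0]

lemma rTail_eq_tsum {p : ℕ → ℝ} (hpsum : HasSum p 1) (k : ℕ) :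
    rTail p k = ∑' i, p (i + (k+1)) := by
  have h := Summable.sum_add_tsum_nat_add (f := p) (k+1) hpsum.summable
  rw [hpsum.tsum_eq] at h
  simp only [rTail]
  linarith

lemma rident {p u : ℕ → ℝ} (hp0 : p 0 = 0) (hu0 : u 0 = 1)
    (hrec : ∀ n, 1 ≤ n → u n = ∑ j ∈ Finset.range (n+1), p j * u (n - j)) :
    ∀ n, ∑ k ∈ Finset.range (n+1), rTail p k * u (n-k) = 1 := by
  intro n
  induction n with
  | zero => simp [rTail_zero hp0, hu0]
  | succ n ih =>
    rw [Finset.sum_range_succ']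
    have hstep : ∀ k, rTail p (k+1) = rTail p k - p (k+1) := by
      intro k
      simp only [rTail, Finset.sum_range_succ]
      ring
    have hrecn := hrec (n+1) (by omega)
    rw [Finset.sum_range_succ'] at hrecn
    simp only [hp0, zero_mul, add_zero, Nat.succ_sub_succ] at hrecn
    have h1 : ∑ k ∈ Finset.range (n+1), rTail p (k+1) * u (n+1-(k+1))
        = ∑ k ∈ Finset.range (n+1), (rTail p k * u (n-k) - p (k+1) * u (n-k)) := by
      refine Finset.sum_congr rfl fun k _ => ?_
      rw [hstep, Nat.succ_sub_succ]
      ring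
    rw [h1, Finset.sum_sub_distrib, ih, ← hrecn, rTail_zero hp0]
    simp

lemma tsum_ofReal_rTail {p : ℕ → ℝ} (hpnn : ∀ j, 0 ≤ p j) (hpsum : HasSum p 1) :
    ∑' k, ENNReal.ofReal (rTail p k) = ∑' j : ℕ, (j : ℝ≥0∞) * ENNReal.ofReal (p j) := by
  set q : ℕ → ℝ≥0∞ := fun j => ENNReal.ofReal (p j) with hq
  set g : ℕ → ℕ → ℝ≥0∞ := fun k j => if k < j then q j else 0 with hg
  have hsummable_tail : ∀ k : ℕ, Summable (fun i => p (i + (k+1))) := fun k =>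
    (summable_nat_add_iff (k+1)).mpr hpsum.summable
  have step1 : ∀ k, ENNReal.ofReal (rTail p k) = ∑' j, g k j := by
    intro k
    rw [rTail_eq_tsum hpsum k, ENNReal.ofReal_tsum_of_nonneg (fun i => hpnn _)
      (hsummable_tail k)]
    have hinj : Function.Injective (fun i : ℕ => i + (k+1)) := fun a b h => by simpa using h
    have hsupp : Function.support (g k) ⊆ Set.range (fun i : ℕ => i + (k+1)) := by
      intro j hj
      have : k < j := by
        by_contra hc
        apply hj
        simp only [hg]
        rw [if_neg hc]
      exact ⟨j - (k+1), by simp; omega⟩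
    have := hinj.tsum_eq (f := g k) hsupp
    rw [← this]
    refine tsum_congr fun i => ?_
    simp only [hg]
    rw [if_pos (by omega : k < i + (k+1))]
  have step2 : ∀ j : ℕ, ∑' k, g k j = (j : ℝ≥0∞) * q j := by
    intro j
    have h1 : ∑' k, g k j = ∑ k ∈ Finset.range j, g k j := by
      refine tsum_eq_sum fun k hk => ?_
      have : ¬ k < j := by simpa using hk
      simp only [hg]
      rw [if_neg this]
    rw [h1]
    have h2 : ∀ k ∈ Finset.range j, g k j = q j := fun k hk => by
      simp only [hg]
      rw [if_pos (Finset.mem_range.mp hk)]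
    rw [Finset.sum_congr rfl h2, Finset.sum_const, Finset.card_range, nsmul_eq_mul]
  calc ∑' k, ENNReal.ofReal (rTail p k) = ∑' k, ∑' j, g k j := tsum_congr step1
    _ = ∑' j, ∑' k, g k j := ENNReal.tsum_comm
    _ = ∑' j : ℕ, (j : ℝ≥0∞) * q j := tsum_congr step2

def goodMonoid (u : ℕ → ℝ) (c : ℝ) : AddSubmonoid ℕ where
  carrier := {i | ∀ φ : ℕ → ℕ, Tendsto φ atTop atTop →
      Tendsto (fun j => u (φ j)) atTop (𝓝 c) → Tendsto (fun j => u (φ j - i)) atTop (𝓝 c)}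
  zero_mem' := fun φ _ h => by simpa using h
  add_mem' := by
    intro i i' hi hi' φ hφ hφu
    have h1 := hi φ hφ hφu
    have hφ' : Tendsto (fun j => φ j - i) atTop atTop :=
      (tendsto_sub_atTop_nat i).comp hφ
    have h2 := hi' (fun j => φ j - i) hφ' h1
    simpa [Nat.sub_sub] using h2

lemma mem_goodMonoid {u : ℕ → ℝ} {c : ℝ} {i : ℕ} :
    i ∈ goodMonoid u c ↔ ∀ φ : ℕ → ℕ, Tendsto φ atTop atTop →
      Tendsto (fun j => u (φ j)) atTop (𝓝 c) →
        Tendsto (fun j => u (φ j - i)) atTop (𝓝 c) := Iff.rfl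

lemma EFP (p u : ℕ → ℝ) (hpnn : ∀ j, 0 ≤ p j) (hp0 : p 0 = 0) (hpsum : HasSum p 1)
    (hgcd : ∀ c : ℕ, (∀ j : ℕ, 0 < p j → c ∣ j) → c = 1)
    (hu0 : u 0 = 1)
    (hrec : ∀ n, 1 ≤ n → u n = ∑ j ∈ Finset.range (n+1), p j * u (n - j))
    (hunn : ∀ n, 0 ≤ u n) (hule : ∀ n, u n ≤ 1) :
    Tendsto u atTop (𝓝 (1 / (∑' j : ℕ, (j : ℝ≥0∞) * ENNReal.ofReal (p j)).toReal)) := by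
  classical
  have hbddU : IsBoundedUnder (· ≤ ·) atTop u := isBoundedUnder_of ⟨1, hule⟩
  have hbddL : IsBoundedUnder (· ≥ ·) atTop u := isBoundedUnder_of ⟨0, hunn⟩
  have hcobU : IsCoboundedUnder (· ≤ ·) atTop u := hbddL.isCoboundedUnder_le
  have hcobL : IsCoboundedUnder (· ≥ ·) atTop u := hbddU.isCoboundedUnder_ge
  set L := limsup u atTop with hL
  set l := liminf u atTop with hl
  have hlL : l ≤ L := liminf_le_limsup hbddU hbddL
  have hL1 : L ≤ 1 := limsup_le_of_le hcobU (Eventually.of_forall hule)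
  have hl0 : 0 ≤ l := le_liminf_of_le hcobL (Eventually.of_forall hunn)
  have hL0 : 0 ≤ L := le_trans hl0 hlL
  have hl1 : l ≤ 1 := le_trans hlL hL1
  -- support has gcd 1
  have hex : ∃ j, 0 < p j := by
    by_contra h
    push_neg at h
    have hz : ∀ j, p j = 0 := fun j => le_antisymm (h j) (hpnn j)
    have h0 : HasSum p 0 := by
      have hzz : p = fun _ => (0:ℝ) := funext hz
      rw [hzz]
      exact hasSum_zero
    exact one_ne_zero (hpsum.unique h0)
  obtain ⟨j₀, hj₀⟩ := hex
  set D : Set ℕ := {d | ∃ F : Finset ℕ, (∀ i ∈ F, 0 < p i) ∧ F.Nonempty ∧ F.gcd id = d}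
    with hD
  have hDne : D.Nonempty := ⟨Finset.gcd {j₀} id, {j₀}, by simpa using hj₀,
    Finset.singleton_nonempty _, rfl⟩
  obtain ⟨F₀, hF₀p, hF₀ne, hF₀g⟩ := Nat.sInf_mem hDne
  have hd1 : sInf D = 1 := by
    have hdpos : sInf D ≠ 0 := by
      intro h0
      rw [h0, Finset.gcd_eq_zero_iff] at hF₀g
      obtain ⟨i, hi⟩ := hF₀ne
      have h2 : id i = 0 := hF₀g i hi
      have h3 := hF₀p i hi
      simp only [id] at h2
      rw [h2, hp0] at h3
      exact lt_irrefl 0 h3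
    apply hgcd
    intro j hj
    have hmem : Nat.gcd j (sInf D) ∈ D := by
      refine ⟨insert j F₀, ?_, Finset.insert_nonempty _ _, ?_⟩
      · intro i hi
        rcases Finset.mem_insert.mp hi with rfl | hi'
        · exact hj
        · exact hF₀p i hi'
      · rw [Finset.gcd_insert, hF₀g]; rfl
    have h1 : sInf D ≤ Nat.gcd j (sInf D) := Nat.sInf_le hmem
    have h2 : Nat.gcd j (sInf D) ∣ sInf D := Nat.gcd_dvd_right _ _
    have h3 : Nat.gcd j (sInf D) ≤ sInf D := Nat.le_of_dvd (Nat.pos_of_ne_zero hdpos) h2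
    have h4 : Nat.gcd j (sInf D) = sInf D := le_antisymm h3 h1
    rw [← h4]
    exact Nat.gcd_dvd_left _ _
  obtain ⟨N₀, hN₀⟩ := closure_gcd F₀
  have hcl : ∀ n, N₀ ≤ n → n ∈ AddSubmonoid.closure (F₀ : Set ℕ) := fun n hn =>
    hN₀ n hn (by rw [hF₀g, hd1]; exact one_dvd n)
  have hGLbig : ∀ i, N₀ ≤ i → i ∈ goodMonoid u L := by
    intro i hi
    have hsub : (F₀ : Set ℕ) ⊆ (goodMonoid u L : Set ℕ) := fun x hx =>
      fun φ hφ hφu => claim_limsup hpnn hp0 hpsum hrec hunn hule hL hL0 (hF₀p x hx) hφ hφu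
    exact AddSubmonoid.closure_le.mpr hsub (hcl i hi)
  have hGlbig : ∀ i, N₀ ≤ i → i ∈ goodMonoid u l := by
    intro i hi
    have hsub : (F₀ : Set ℕ) ⊆ (goodMonoid u l : Set ℕ) := fun x hx =>
      fun φ hφ hφu =>
        claim_liminf hpnn hp0 hpsum hrec hunn hule hl hl0 hl1 (hF₀p x hx) hφ hφu
    exact AddSubmonoid.closure_le.mpr hsub (hcl i hi)
  -- subsequence attaining the limsup
  have hfreqL : ∀ ε : ℝ, 0 < ε → ∃ᶠ n in atTop, |u n - L| < ε := by
    intro ε hε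
    have h1 : ∃ᶠ n in atTop, L - ε < u n :=
      frequently_lt_of_lt_limsup hcobU (by rw [← hL]; linarith)
    have h2 : ∀ᶠ n in atTop, u n < L + ε :=
      eventually_lt_of_limsup_lt (by rw [← hL]; linarith) hbddU
    refine (h1.and_eventually h2).mono fun n hn => ?_
    rw [abs_lt]
    exact ⟨by linarith [hn.1], by linarith [hn.2]⟩
  obtain ⟨φ, hφm, hφu⟩ := exists_subseq_tendsto_of_frequently hfreqL
  have hφt : Tendsto φ atTop atTop := hφm.tendsto_atTop
  have hshiftL : ∀ k : ℕ, Tendsto (fun j => u (φ j - N₀ - k)) atTop (𝓝 L) := by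
    intro k
    have h1 := hGLbig (N₀ + k) (by omega) φ hφt hφu
    simpa [Nat.sub_sub] using h1
  -- the basic upper inequality
  have hup : ∀ M : ℕ, L * ∑ k ∈ Finset.range (M+1), rTail p k ≤ 1 := by
    intro M
    have hev : ∀ᶠ j in atTop,
        ∑ k ∈ Finset.range (M+1), rTail p k * u (φ j - N₀ - k) ≤ 1 := by
      filter_upwards [hφt.eventually_ge_atTop (N₀ + M)] with j hj
      calc ∑ k ∈ Finset.range (M+1), rTail p k * u (φ j - N₀ - k)
          ≤ ∑ k ∈ Finset.range ((φ j - N₀)+1), rTail p k * u (φ j - N₀ - k) :=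
            Finset.sum_le_sum_of_subset_of_nonneg
              (Finset.range_subset_range.mpr (by omega))
              (fun k _ _ => mul_nonneg (rTail_nonneg hpnn hpsum k) (hunn _))
        _ = 1 := rident hp0 hu0 hrec (φ j - N₀)
    have hlim : Tendsto (fun j => ∑ k ∈ Finset.range (M+1), rTail p k * u (φ j - N₀ - k))
        atTop (𝓝 (∑ k ∈ Finset.range (M+1), rTail p k * L)) :=
      tendsto_finset_sum _ (fun k _ => (hshiftL k).const_mul (rTail p k))
    have h1 := le_of_tendsto hlim hev
    rw [mul_comm, Finset.sum_mul]
    exact h1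
  set μE := ∑' j : ℕ, (j : ℝ≥0∞) * ENNReal.ofReal (p j) with hμEdef
  have hμEr : ∑' k, ENNReal.ofReal (rTail p k) = μE := tsum_ofReal_rTail hpnn hpsum
  by_cases htop : μE = ⊤
  · -- infinite mean : limit 0
    have hnots : ¬ Summable (rTail p) := by
      intro hs
      have h1 := ENNReal.ofReal_tsum_of_nonneg (rTail_nonneg hpnn hpsum) hs
      rw [hμEr, htop] at h1
      exact ENNReal.ofReal_ne_top h1
    have hdiv : Tendsto (fun n => ∑ k ∈ Finset.range n, rTail p k) atTop atTop :=
      (not_summable_iff_tendsto_nat_atTop_of_nonneg (rTail_nonneg hpnn hpsum)).mp hnots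
    have hL0' : L = 0 := by
      by_contra hne
      have hLpos : 0 < L := lt_of_le_of_ne hL0 (Ne.symm hne)
      obtain ⟨M, hM⟩ := (hdiv.eventually_gt_atTop (1/L)).exists
      have h2 : ∑ k ∈ Finset.range M, rTail p k ≤ ∑ k ∈ Finset.range (M+1), rTail p k :=
        Finset.sum_le_sum_of_subset_of_nonneg (Finset.range_subset_range.mpr (by omega))
          (fun k _ _ => rTail_nonneg hpnn hpsum k)
      have h3 := hup M
      have h4 : 1/L < ∑ k ∈ Finset.range (M+1), rTail p k := lt_of_lt_of_le hM h2
      have h5 : L * (1/L) < L * ∑ k ∈ Finset.range (M+1), rTail p k :=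
        (mul_lt_mul_iff_right₀ hLpos).mpr h4
      rw [mul_one_div_cancel (ne_of_gt hLpos)] at h5
      linarith
    have hl0' : l = 0 := le_antisymm (hL0' ▸ hlL) hl0
    have htend : Tendsto u atTop (𝓝 0) :=
      tendsto_of_liminf_eq_limsup hl0' hL0' hbddU hbddL
    rw [htop]
    simpa using htend
  · -- finite mean
    set μ := μE.toReal with hμdef
    have hsummr : Summable (rTail p) := by
      have h0 : (∑' k, ENNReal.ofReal (rTail p k)) ≠ ⊤ := by rw [hμEr]; exact htop
      exact (ENNReal.summable_toReal h0).congr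
        fun k => ENNReal.toReal_ofReal (rTail_nonneg hpnn hpsum k)
    have htsum : ∑' k, rTail p k = μ := by
      have h2 := ENNReal.tsum_toReal_eq (f := fun k => ENNReal.ofReal (rTail p k))
        (fun k => ENNReal.ofReal_ne_top)
      rw [hμEr] at h2
      have h3 : ∀ k, (ENNReal.ofReal (rTail p k)).toReal = rTail p k :=
        fun k => ENNReal.toReal_ofReal (rTail_nonneg hpnn hpsum k)
      calc ∑' k, rTail p k = ∑' k, (ENNReal.ofReal (rTail p k)).toReal :=
            tsum_congr fun k => (h3 k).symm
        _ = μ := h2.symm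
    have hμ1 : (1:ℝ) ≤ μ := by
      have h1 : rTail p 0 ≤ ∑' k, rTail p k :=
        Summable.le_tsum hsummr 0 (fun j _ => rTail_nonneg hpnn hpsum j)
      rw [rTail_zero hp0, htsum] at h1
      exact h1
    have hpartial : Tendsto (fun M : ℕ => ∑ k ∈ Finset.range (M+1), rTail p k)
        atTop (𝓝 μ) := by
      have h1 := hsummr.hasSum.tendsto_sum_nat
      rw [htsum] at h1
      exact h1.comp (tendsto_add_atTop_nat 1)
    have hLμ : L * μ ≤ 1 :=
      le_of_tendsto (hpartial.const_mul L) (Eventually.of_forall hup)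
    -- subsequence attaining the liminf
    have hfreql : ∀ ε : ℝ, 0 < ε → ∃ᶠ n in atTop, |u n - l| < ε := by
      intro ε hε
      have h1 : ∃ᶠ n in atTop, u n < l + ε :=
        frequently_lt_of_liminf_lt hcobL (by rw [← hl]; linarith)
      have h2 : ∀ᶠ n in atTop, l - ε < u n :=
        eventually_lt_of_lt_liminf (by rw [← hl]; linarith) hbddL
      refine (h1.and_eventually h2).mono fun n hn => ?_
      rw [abs_lt]
      exact ⟨by linarith [hn.2], by linarith [hn.1]⟩
    obtain ⟨ψ, hψm, hψu⟩ := exists_subseq_tendsto_of_frequently hfreql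
    have hψt : Tendsto ψ atTop atTop := hψm.tendsto_atTop
    have hshiftl : ∀ k : ℕ, Tendsto (fun j => u (ψ j - N₀ - k)) atTop (𝓝 l) := by
      intro k
      have h1 := hGlbig (N₀ + k) (by omega) ψ hψt hψu
      simpa [Nat.sub_sub] using h1
    have hlow : ∀ M : ℕ, 1 ≤ l * ∑ k ∈ Finset.range (M+1), rTail p k
        + (μ - ∑ k ∈ Finset.range (M+1), rTail p k) := by
      intro M
      set S := ∑ k ∈ Finset.range (M+1), rTail p k with hS
      have hev : ∀ᶠ j in atTop,
          1 ≤ ∑ k ∈ Finset.range (M+1), rTail p k * u (ψ j - N₀ - k) + (μ - S) := by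
        filter_upwards [hψt.eventually_ge_atTop (N₀ + M)] with j hj
        set n := ψ j - N₀ with hn
        have hMn : M ≤ n := by omega
        have h1 := rident hp0 hu0 hrec n
        have h2 : ∑ k ∈ Finset.range (n+1), rTail p k * u (n-k)
            = ∑ k ∈ Finset.range (M+1), rTail p k * u (n-k)
              + ∑ k ∈ Finset.Ico (M+1) (n+1), rTail p k * u (n-k) := by
          simp only [Finset.range_eq_Ico]
          exact (Finset.sum_Ico_consecutive _ (Nat.zero_le _) (by omega)).symm
        have h3 : ∑ k ∈ Finset.Ico (M+1) (n+1), rTail p k * u (n-k)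
            ≤ ∑ k ∈ Finset.Ico (M+1) (n+1), rTail p k :=
          Finset.sum_le_sum fun k _ =>
            mul_le_of_le_one_right (rTail_nonneg hpnn hpsum k) (hule _)
        have h4 : S + ∑ k ∈ Finset.Ico (M+1) (n+1), rTail p k
            = ∑ k ∈ Finset.range (n+1), rTail p k := by
          simp only [hS, Finset.range_eq_Ico]
          exact Finset.sum_Ico_consecutive _ (Nat.zero_le _) (by omega)
        have h5 : ∑ k ∈ Finset.range (n+1), rTail p k ≤ μ := by
          rw [← htsum]
          exact Summable.sum_le_tsum _ (fun k _ => rTail_nonneg hpnn hpsum k) hsummr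
        linarith
      have hlim : Tendsto
          (fun j => ∑ k ∈ Finset.range (M+1), rTail p k * u (ψ j - N₀ - k) + (μ - S))
          atTop (𝓝 (∑ k ∈ Finset.range (M+1), rTail p k * l + (μ - S))) :=
        (tendsto_finset_sum _ (fun k _ => (hshiftl k).const_mul (rTail p k))).add
          tendsto_const_nhds
      have h6 := ge_of_tendsto hlim hev
      have h7 : ∑ k ∈ Finset.range (M+1), rTail p k * l = l * S :=
        (Finset.sum_mul _ _ _).symm.trans (mul_comm _ _)
      rw [h7] at h6
      exact h6
    have h1lμ : 1 ≤ l * μ := by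
      have hl2 : Tendsto (fun M : ℕ => l * ∑ k ∈ Finset.range (M+1), rTail p k
          + (μ - ∑ k ∈ Finset.range (M+1), rTail p k)) atTop (𝓝 (l * μ + (μ - μ))) :=
        (hpartial.const_mul l).add (tendsto_const_nhds.sub hpartial)
      have h2 := ge_of_tendsto hl2 (Eventually.of_forall hlow)
      simpa using h2
    have hμpos : (0:ℝ) < μ := by linarith
    have hLle : L ≤ 1/μ := by
      rw [le_div_iff₀ hμpos]
      exact hLμ
    have hlge : 1/μ ≤ l := by
      rw [div_le_iff₀ hμpos]
      exact h1lμ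
    have hLeq : L = 1/μ := le_antisymm hLle (le_trans hlge hlL)
    have hleq : l = 1/μ := le_antisymm (hlL.trans hLle) hlge
    exact tendsto_of_liminf_eq_limsup hleq hLeq hbddU hbddL

/-- Key renewal theorem, arithmetic case: for an aperiodic probability
mass function `p` on ℕ with `p 0 = 0`, the renewal mass function `u_m = Σ_k p^{*k}(m)`
and a summable nonnegative sequence `b`, the sequence `a_n = Σ_{m=0}^n b_{n-m} u_m`
converges to `(Σ_m b_m) / (Σ_j j p_j)`, interpreted as `0` when `Σ_j j p_j = ∞`. -/
theorem key_renewal_theorem (p : ℕ → ℝ) (hpnn : ∀ j, 0 ≤ p j) (hp0 : p 0 = 0)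
    (hpsum : HasSum p 1)
    (hgcd : ∀ c : ℕ, (∀ j : ℕ, 0 < p j → c ∣ j) → c = 1)
    (u : ℕ → ℝ) (hu : ∀ m, u m = ∑' k : ℕ, convPow p k m)
    (b : ℕ → ℝ) (hbnn : ∀ n, 0 ≤ b n) (hbsum : Summable b)
    (a : ℕ → ℝ) (ha : ∀ n, a n = ∑ m ∈ Finset.range (n + 1), b (n - m) * u m) :
    Tendsto a atTop
      (𝓝 ((∑' m : ℕ, b m) / (∑' j : ℕ, (j : ℝ≥0∞) * ENNReal.ofReal (p j)).toReal)) := by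
  classical
  have hu_sum : ∀ m K, m < K → u m = ∑ k ∈ Finset.range K, convPow p k m := by
    intro m K hK
    rw [hu m]
    exact tsum_eq_sum fun k hk => convPow_eq_zero hp0 k m (by
      simp only [Finset.mem_range, not_lt] at hk
      omega)
  have hu0 : u 0 = 1 := by
    rw [hu_sum 0 1 (by omega)]
    simp [convPow]
  have hrec : ∀ n, 1 ≤ n → u n = ∑ j ∈ Finset.range (n+1), p j * u (n - j) := by
    intro n hn
    rw [hu_sum n (n+1) (by omega), Finset.sum_range_succ']
    have hzero : convPow p 0 n = 0 := by
      simp only [convPow]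
      rw [if_neg (by omega)]
    rw [hzero, add_zero]
    have hsw : ∑ k ∈ Finset.range n, convPow p (k+1) n
        = ∑ j ∈ Finset.range (n+1), ∑ k ∈ Finset.range n, p j * convPow p k (n - j) := by
      calc ∑ k ∈ Finset.range n, convPow p (k+1) n
          = ∑ k ∈ Finset.range n, ∑ j ∈ Finset.range (n+1), p j * convPow p k (n-j) :=
            Finset.sum_congr rfl fun k _ => convPow_succ_def p k n
        _ = ∑ j ∈ Finset.range (n+1), ∑ k ∈ Finset.range n, p j * convPow p k (n-j) :=
            Finset.sum_comm
    rw [hsw]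
    refine Finset.sum_congr rfl fun j hj => ?_
    have hjn : j ≤ n := by
      have := Finset.mem_range.mp hj
      omega
    rcases Nat.eq_zero_or_pos j with rfl | hj1
    · simp [hp0]
    · rw [← Finset.mul_sum]
      congr 1
      exact (hu_sum (n-j) n (by omega)).symm
  have hbounds : ∀ n, 0 ≤ u n ∧ u n ≤ 1 := by
    intro n
    induction n using Nat.strong_induction_on with
    | _ n ih =>
      rcases Nat.eq_zero_or_pos n with rfl | hn
      · rw [hu0]; norm_num
      · have hr := hrec n hn
        constructor
        · rw [hr]
          refine Finset.sum_nonneg fun j hj => ?_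
          rcases Nat.eq_zero_or_pos j with rfl | hj1
          · simp [hp0]
          · exact mul_nonneg (hpnn j) (ih (n - j) (by omega)).1
        · rw [hr]
          have h1 : ∀ j ∈ Finset.range (n+1), p j * u (n-j) ≤ p j := by
            intro j hj
            rcases Nat.eq_zero_or_pos j with rfl | hj1
            · simp [hp0]
            · exact mul_le_of_le_one_right (hpnn j) (ih (n-j) (by omega)).2
          calc ∑ j ∈ Finset.range (n+1), p j * u (n-j)
              ≤ ∑ j ∈ Finset.range (n+1), p j := Finset.sum_le_sum h1
            _ ≤ 1 := sum_le_hasSum _ (fun j _ => hpnn j) hpsum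
  have hunn : ∀ n, 0 ≤ u n := fun n => (hbounds n).1
  have hule : ∀ n, u n ≤ 1 := fun n => (hbounds n).2
  have htendu := EFP p u hpnn hp0 hpsum hgcd hu0 hrec hunn hule
  set Lv := (1 : ℝ) / (∑' j : ℕ, (j : ℝ≥0∞) * ENNReal.ofReal (p j)).toReal with hLv
  set F : ℕ → ℕ → ℝ := fun n k => if k ≤ n then b k * u (n - k) else 0 with hF
  have haF : ∀ n, a n = ∑' k, F n k := by
    intro n
    have h1 : ∑' k, F n k = ∑ k ∈ Finset.range (n+1), F n k :=
      tsum_eq_sum fun k hk => by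
        simp only [hF]
        rw [if_neg (by simp only [Finset.mem_range, not_lt] at hk; omega)]
    rw [h1, ha n, ← Finset.sum_range_reflect (fun m => b (n-m) * u m) (n+1)]
    refine Finset.sum_congr rfl fun k hk => ?_
    have hk' : k ≤ n := by
      have := Finset.mem_range.mp hk
      omega
    simp only [hF]
    rw [if_pos hk']
    have e1 : n + 1 - 1 - k = n - k := by omega
    have e2 : n - (n - k) = k := by omega
    rw [e1, e2]
  have hblim : ∀ k, Tendsto (fun n => F n k) atTop (𝓝 (b k * Lv)) := by
    intro k
    have h1 : Tendsto (fun n : ℕ => u (n - k)) atTop (𝓝 Lv) :=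
      htendu.comp (tendsto_sub_atTop_nat k)
    have h2 : Tendsto (fun n : ℕ => b k * u (n - k)) atTop (𝓝 (b k * Lv)) :=
      h1.const_mul (b k)
    refine Tendsto.congr' ?_ h2
    filter_upwards [eventually_ge_atTop k] with n hn
    simp only [hF]
    rw [if_pos hn]
  have hbound : ∀ᶠ n in atTop, ∀ k, ‖F n k‖ ≤ b k := by
    refine Eventually.of_forall fun n k => ?_
    simp only [hF]
    split
    · rw [Real.norm_eq_abs, abs_of_nonneg (mul_nonneg (hbnn k) (hunn _))]
      exact mul_le_of_le_one_right (hbnn k) (hule _)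
    · simp [hbnn k]
  have hmain := tendsto_tsum_of_dominated_convergence hbsum hblim hbound
  have hsum2 : ∑' k, b k * Lv = (∑' m, b m) * Lv := tsum_mul_right
  rw [hsum2] at hmain
  have hfinal : Tendsto a atTop (𝓝 ((∑' m, b m) * Lv)) :=
    hmain.congr fun n => (haF n).symm
  have heq : (∑' m, b m) * Lv
      = (∑' m : ℕ, b m) / (∑' j : ℕ, (j : ℝ≥0∞) * ENNReal.ofReal (p j)).toReal := by
    rw [hLv, mul_one_div]
  rw [heq] at hfinal
  exact hfinal

end
end

section
/- In the zero-delay regenerative setting, for integers r, ℓ ≥ 0, the sequence a_n := E[|Ξ_{κ(n)}|^r T_{κ(n)}^ℓ] satisfies the renewal equation a_n = Σ_{m=0}^{n} b_{n−m} u_m for every n ≥ 0, where b_n := E[|Ξ₁|^r T₁^ℓ 1_{T₁ > n}] and u_m := Σ_{k≥0} P(τ_k = m). Moreover Σ_{n≥0} b_n = E[|Ξ₁|^r T₁^{ℓ+1}]. -/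
open MeasureTheory ProbabilityTheory Filter Finset
open scoped ENNReal Topology

noncomputable section

/-- Tensor product of two vectors in `ℝ^d`, viewed as a `d × d` matrix. -/
def tens {d : ℕ} (x y : Fin d → ℝ) : Fin d × Fin d → ℝ := fun ij => x ij.1 * y ij.2

/-- Transpose of a matrix indexed by `Fin d × Fin d`. -/
def transp {d : ℕ} (A : Fin d × Fin d → ℝ) : Fin d × Fin d → ℝ := fun ij => A (ij.2, ij.1)

/-- Antisymmetric part of a matrix: `Antisym(A) = ½ (A − Aᵀ)`. -/
def antisym {d : ℕ} (A : Fin d × Fin d → ℝ) : Fin d × Fin d → ℝ :=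
  (2⁻¹ : ℝ) • (A - transp A)

/-- Discrete Stratonovich iterated sum
`I^Str_{M,N}(X) = Σ_{k=M+1}^N (X_{M,k-1} ⊗ X_{k-1,k} − ½ X_{k-1,k} ⊗ X_{k-1,k})`. -/
def IStr {d : ℕ} (X : ℕ → Fin d → ℝ) (M N : ℕ) : Fin d × Fin d → ℝ :=
  ∑ k ∈ Finset.Icc (M + 1) N,
    (tens (X (k - 1) - X M) (X k - X (k - 1))
      - (2⁻¹ : ℝ) • tens (X k - X (k - 1)) (X k - X (k - 1)))

/-- Diffusively rescaled linear interpolation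
`X^{(n)}_t = n^{-1/2} X_{⌊nt⌋} + n^{-1/2}(nt − ⌊nt⌋)(X_{⌊nt⌋+1} − X_{⌊nt⌋})`. -/
def interp {E : Type*} [AddCommGroup E] [Module ℝ E] (X : ℕ → E) (n : ℕ) (t : ℝ) : E :=
  (Real.sqrt n)⁻¹ • X ⌊(n : ℝ) * t⌋₊ +
    (((n : ℝ) * t - ⌊(n : ℝ) * t⌋₊) / Real.sqrt n) • (X (⌊(n : ℝ) * t⌋₊ + 1) - X ⌊(n : ℝ) * t⌋₊)

/-- Rescaled interpolated second-level (iterated-sum) process `𝕏^{(n)}_{s,t}`. -/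
def interp2 {d : ℕ} (X : ℕ → Fin d → ℝ) (n : ℕ) (s t : ℝ) : Fin d × Fin d → ℝ :=
  ((n : ℝ))⁻¹ • IStr X ⌊(n : ℝ) * s⌋₊ ⌊(n : ℝ) * t⌋₊ +
    (((n : ℝ) * (t - s) - ⌊(n : ℝ) * t⌋₊ + ⌊(n : ℝ) * s⌋₊) / n) •
      (IStr X ⌊(n : ℝ) * s⌋₊ (⌊(n : ℝ) * t⌋₊ + 1) - IStr X ⌊(n : ℝ) * s⌋₊ ⌊(n : ℝ) * t⌋₊)

/-- `p`-variation norm on `[0,T]` of a one-parameter path, with values in `ℝ≥0∞`. -/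
def pVar {E : Type*} [SeminormedAddGroup E] (p T : ℝ) (f : ℝ → E) : ℝ≥0∞ :=
  (⨆ (m : ℕ) (t : ℕ → ℝ) (_ : Monotone t) (_ : t 0 = 0) (_ : t m = T),
    ∑ i ∈ Finset.range m, (‖f (t (i + 1)) - f (t i)‖₊ : ℝ≥0∞) ^ p) ^ p⁻¹

/-- `q`-variation norm on `[0,T]` of a two-parameter increment process `F = (F_{s,t})`. -/
def pVar2 {E : Type*} [SeminormedAddGroup E] (q T : ℝ) (F : ℝ → ℝ → E) : ℝ≥0∞ :=
  (⨆ (m : ℕ) (t : ℕ → ℝ) (_ : Monotone t) (_ : t 0 = 0) (_ : t m = T),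
    ∑ i ∈ Finset.range m, (‖F (t i) (t (i + 1))‖₊ : ℝ≥0∞) ^ q) ^ q⁻¹

/-- Regeneration interval `T_k = τ_{k+1} − τ_k`. -/
def regInt {Ω : Type*} (τ : ℕ → Ω → ℕ) (k : ℕ) (ω : Ω) : ℕ := τ (k + 1) ω - τ k ω

/-- The `k`-th regeneration block: the pair consisting of `T_k` and the increment path
`(X_{τ_k, τ_k + m})_{0 ≤ m ≤ T_k}` (frozen after time `T_k`). -/
def block {Ω : Type*} {d : ℕ} (X : ℕ → Ω → (Fin d → ℝ)) (τ : ℕ → Ω → ℕ) (k : ℕ) (ω : Ω) :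
    ℕ × (ℕ → Fin d → ℝ) :=
  (regInt τ k ω, fun m => X (τ k ω + min m (regInt τ k ω)) ω - X (τ k ω) ω)

/-- `Ξ_m^i = max{|X^i_{τ_m, τ_m + k}| : 0 ≤ k ≤ T_m}`. -/
def XiC {Ω : Type*} {d : ℕ} (X : ℕ → Ω → (Fin d → ℝ)) (τ : ℕ → Ω → ℕ) (i : Fin d)
    (m : ℕ) (ω : Ω) : ℝ :=
  (Finset.range (regInt τ m ω + 1)).sup' Finset.nonempty_range_add_one
    (fun k => |X (τ m ω + k) ω i - X (τ m ω) ω i|)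

/-- Euclidean norm `|Ξ_m|` of the vector `Ξ_m = (Ξ_m^1, …, Ξ_m^d)`. -/
def XiNorm {Ω : Type*} {d : ℕ} (X : ℕ → Ω → (Fin d → ℝ)) (τ : ℕ → Ω → ℕ)
    (m : ℕ) (ω : Ω) : ℝ :=
  Real.sqrt (∑ i : Fin d, XiC X τ i m ω ^ 2)

/-- Delayed regenerative increments: `τ₀ = 0`, the `τ_k` are strictly increasing, all data
is measurable, the regeneration blocks form an independent family, and the blocks with
index `k ≥ 1` are identically distributed (hence i.i.d. and independent of the initial
block). -/
structure DelayedRegenerative {Ω : Type*} [MeasurableSpace Ω] (P : Measure Ω) {d : ℕ}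
    (X : ℕ → Ω → (Fin d → ℝ)) (τ : ℕ → Ω → ℕ) : Prop where
  tau_zero : ∀ ω, τ 0 ω = 0
  tau_mono : ∀ ω, StrictMono fun k => τ k ω
  meas_X : ∀ k, Measurable (X k)
  meas_tau : ∀ k, Measurable (τ k)
  indep : iIndepFun (block X τ) P
  ident : ∀ k : ℕ, 1 ≤ k → IdentDistrib (block X τ k) (block X τ 1) P P

/-- Assumption (A): for every coordinate `i`, every `m ∈ {0,1}` and `q ∈ {0,2}`,
`0 < E[(Ξ_m^i)^q T_m] < ∞`. -/
def AssumptionA {Ω : Type*} [MeasurableSpace Ω] (P : Measure Ω) {d : ℕ}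
    (X : ℕ → Ω → (Fin d → ℝ)) (τ : ℕ → Ω → ℕ) : Prop :=
  ∀ i : Fin d, ∀ m ∈ ({0, 1} : Set ℕ), ∀ q ∈ ({0, 2} : Set ℕ),
    Integrable (fun ω => XiC X τ i m ω ^ q * (regInt τ m ω : ℝ)) P ∧
      0 < ∫ ω, XiC X τ i m ω ^ q * (regInt τ m ω : ℝ) ∂P

/-- Centering: `E[X_{τ_k, τ_{k+1}}] = 0` (componentwise, with integrability) for `k ≥ 1`. -/
def Centered {Ω : Type*} [MeasurableSpace Ω] (P : Measure Ω) {d : ℕ}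
    (X : ℕ → Ω → (Fin d → ℝ)) (τ : ℕ → Ω → ℕ) : Prop :=
  ∀ k : ℕ, 1 ≤ k → ∀ i : Fin d,
    Integrable (fun ω => X (τ (k + 1) ω) ω i - X (τ k ω) ω i) P ∧
      ∫ ω, (X (τ (k + 1) ω) ω i - X (τ k ω) ω i) ∂P = 0

section Renewal

variable {Ω : Type*} [MeasurableSpace Ω] {d : ℕ}

/-- Base functional on blocks: `(√(Σᵢ (maxₖ |pathᵏⁱ|)²))^r · T^ℓ`. -/
def baseFn (d r ℓ : ℕ) (bl : ℕ × (ℕ → Fin d → ℝ)) : ℝ :=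
  (Real.sqrt (∑ i : Fin d,
      ((Finset.range (bl.1 + 1)).sup' Finset.nonempty_range_add_one
        (fun k => |bl.2 k i|)) ^ 2)) ^ r * (bl.1 : ℝ) ^ ℓ

/-- Truncated functional. -/
def phiFn (d r ℓ j : ℕ) (bl : ℕ × (ℕ → Fin d → ℝ)) : ℝ≥0∞ :=
  if j < bl.1 then ENNReal.ofReal (baseFn d r ℓ bl) else 0

lemma measurable_baseFn (d r ℓ : ℕ) : Measurable (baseFn d r ℓ) := by
  have h1 : ∀ T : ℕ, Measurable fun p : (ℕ → Fin d → ℝ) => baseFn d r ℓ (T, p) := by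
    intro T
    simp only [baseFn]
    apply Measurable.mul _ measurable_const
    apply Measurable.pow_const
    apply Measurable.sqrt
    apply Finset.measurable_sum
    intro i _
    apply Measurable.pow_const
    apply Finset.measurable_range_sup''
    intro k _
    exact ((measurable_pi_apply i).comp (measurable_pi_apply k)).abs
  have h2 : Measurable fun p : (ℕ → Fin d → ℝ) × ℕ => baseFn d r ℓ (p.2, p.1) :=
    measurable_from_prod_countable_left h1
  have h3 : baseFn d r ℓ
      = (fun p : (ℕ → Fin d → ℝ) × ℕ => baseFn d r ℓ (p.2, p.1)) ∘ Prod.swap := by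
    funext bl; rfl
  rw [h3]
  exact h2.comp measurable_swap

lemma measurable_phiFn (d r ℓ j : ℕ) : Measurable (phiFn d r ℓ j) := by
  apply Measurable.ite
  · exact measurable_fst measurableSet_Ioi
  · exact ENNReal.measurable_ofReal.comp (measurable_baseFn d r ℓ)
  · exact measurable_const

lemma measurable_eval {X : ℕ → Ω → (Fin d → ℝ)} (hX : ∀ k, Measurable (X k))
    {N : Ω → ℕ} (hN : Measurable N) : Measurable fun ω => X (N ω) ω := by
  have h : Measurable fun p : Ω × ℕ => X p.2 p.1 :=
    measurable_from_prod_countable_left fun j => hX j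
  exact h.comp (measurable_id.prodMk hN)

lemma measurable_regInt' {τ : ℕ → Ω → ℕ} (hτ : ∀ k, Measurable (τ k)) (k : ℕ) :
    Measurable (regInt τ k) :=
  (hτ (k + 1)).sub (hτ k)

lemma measurable_block {X : ℕ → Ω → (Fin d → ℝ)} {τ : ℕ → Ω → ℕ}
    (hX : ∀ k, Measurable (X k)) (hτ : ∀ k, Measurable (τ k)) (k : ℕ) :
    Measurable (block X τ k) := by
  apply Measurable.prodMk (measurable_regInt' hτ k)
  apply measurable_pi_lambda
  intro m
  have hN : Measurable fun ω => τ k ω + min m (regInt τ k ω) :=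
    (hτ k).add (measurable_const.min (measurable_regInt' hτ k))
  exact (measurable_eval hX hN).sub (measurable_eval hX (hτ k))

lemma tau_eq_sum {τ : ℕ → Ω → ℕ} (h0 : ∀ ω, τ 0 ω = 0)
    (hmono : ∀ ω, StrictMono fun k => τ k ω) (k : ℕ) (ω : Ω) :
    τ k ω = ∑ j ∈ Finset.range k, regInt τ j ω := by
  induction k with
  | zero => simpa using h0 ω
  | succ k ih =>
    rw [Finset.sum_range_succ, ← ih]
    have hle : τ k ω ≤ τ (k + 1) ω := ((hmono ω).monotone (Nat.le_succ k))
    unfold regInt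
    omega

lemma base_block {X : ℕ → Ω → (Fin d → ℝ)} {τ : ℕ → Ω → ℕ} (r ℓ k : ℕ) (ω : Ω) :
    baseFn d r ℓ (block X τ k ω) = XiNorm X τ k ω ^ r * (regInt τ k ω : ℝ) ^ ℓ := by
  have hsup : ∀ i : Fin d,
      (Finset.range (regInt τ k ω + 1)).sup' Finset.nonempty_range_add_one
        (fun m => |X (τ k ω + min m (regInt τ k ω)) ω i - X (τ k ω) ω i|) = XiC X τ i k ω := by
    intro i
    unfold XiC
    refine Finset.sup'_congr _ rfl ?_
    intro m hm
    rw [Finset.mem_range] at hm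
    rw [min_eq_left (by omega)]
  simp only [baseFn, block, XiNorm, Pi.sub_apply]
  rw [Finset.sum_congr rfl fun i _ => by rw [hsup i]]

end Renewal

/-- in the zero-delay (i.i.d. blocks) regenerative setting, the sequence
`a_n = E[|Ξ_{κ(n)}|^r T_{κ(n)}^ℓ]` satisfies the renewal equation
`a_n = Σ_{m=0}^n b_{n−m} u_m` with `b_n = E[|Ξ₁|^r T₁^ℓ 1_{T₁ > n}]` and
`u_m = Σ_k P(τ_k = m)`; moreover `Σ_n b_n = E[|Ξ₁|^r T₁^{ℓ+1}]`
(all quantities taken in `ℝ≥0∞`). -/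
theorem renewal_equation_for_straddling_block {Ω : Type*} [MeasurableSpace Ω]
    (P : Measure Ω) [IsProbabilityMeasure P] {d : ℕ}
    (X : ℕ → Ω → (Fin d → ℝ)) (τ : ℕ → Ω → ℕ)
    (hreg : DelayedRegenerative P X τ)
    (hzero : IdentDistrib (block X τ 0) (block X τ 1) P P)
    (κ : ℕ → Ω → ℕ) (hκ : ∀ (n : ℕ) (ω : Ω), τ (κ n ω) ω ≤ n ∧ n < τ (κ n ω + 1) ω)
    (r ℓ : ℕ)
    (a : ℕ → ℝ≥0∞)
    (ha : ∀ n, a n =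
      ∫⁻ ω, ENNReal.ofReal (XiNorm X τ (κ n ω) ω ^ r * (regInt τ (κ n ω) ω : ℝ) ^ ℓ) ∂P)
    (b : ℕ → ℝ≥0∞)
    (hb : ∀ n, b n = ∫⁻ ω in {ω | n < regInt τ 1 ω},
      ENNReal.ofReal (XiNorm X τ 1 ω ^ r * (regInt τ 1 ω : ℝ) ^ ℓ) ∂P)
    (u : ℕ → ℝ≥0∞) (hu : ∀ m, u m = ∑' k : ℕ, P {ω | τ k ω = m}) :
    (∀ n : ℕ, a n = ∑ m ∈ Finset.range (n + 1), b (n - m) * u m) ∧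
      (∑' n : ℕ, b n) =
        ∫⁻ ω, ENNReal.ofReal (XiNorm X τ 1 ω ^ r * (regInt τ 1 ω : ℝ) ^ (ℓ + 1)) ∂P := by
  classical
  have hXm := hreg.meas_X
  have hτm := hreg.meas_tau
  have hBmeas : ∀ k, Measurable (block X τ k) := measurable_block hXm hτm
  have hTmeas : ∀ k, Measurable (regInt τ k) := measurable_regInt' hτm
  have hIdent : ∀ k, IdentDistrib (block X τ k) (block X τ 1) P P := by
    intro k
    rcases Nat.eq_zero_or_pos k with h | h
    · exact h ▸ hzero
    · exact hreg.ident k h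
  have hgphi : ∀ (k : ℕ) (ω : Ω), ENNReal.ofReal (XiNorm X τ k ω ^ r * (regInt τ k ω : ℝ) ^ ℓ)
      = ENNReal.ofReal (baseFn d r ℓ (block X τ k ω)) := by
    intro k ω; rw [base_block]
  have hgmeas : ∀ k : ℕ,
      Measurable fun ω => ENNReal.ofReal (XiNorm X τ k ω ^ r * (regInt τ k ω : ℝ) ^ ℓ) := by
    intro k
    have h : (fun ω => ENNReal.ofReal (XiNorm X τ k ω ^ r * (regInt τ k ω : ℝ) ^ ℓ))
        = fun ω => ENNReal.ofReal (baseFn d r ℓ (block X τ k ω)) := funext fun ω => hgphi k ω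
    rw [h]
    exact ENNReal.measurable_ofReal.comp ((measurable_baseFn d r ℓ).comp (hBmeas k))
  have hBset : ∀ k j : ℕ, MeasurableSet {ω | j < regInt τ k ω} := fun k j =>
    hTmeas k measurableSet_Ioi
  have hindphi : ∀ (k j : ℕ) (ω : Ω),
      Set.indicator {ω | j < regInt τ k ω}
        (fun ω => ENNReal.ofReal (XiNorm X τ k ω ^ r * (regInt τ k ω : ℝ) ^ ℓ)) ω
      = phiFn d r ℓ j (block X τ k ω) := by
    intro k j ω
    by_cases h : j < regInt τ k ω
    · rw [Set.indicator_of_mem (show ω ∈ {ω | j < regInt τ k ω} from h)]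
      rw [hgphi k ω]
      simp only [phiFn, block]
      exact (if_pos h).symm
    · rw [Set.indicator_of_notMem (show ω ∉ {ω | j < regInt τ k ω} from h)]
      simp only [phiFn, block]
      exact (if_neg h).symm
  have hbphi : ∀ j, b j = ∫⁻ ω, phiFn d r ℓ j (block X τ 1 ω) ∂P := by
    intro j
    rw [hb j, ← lintegral_indicator (hBset 1 j)]
    exact lintegral_congr fun ω => hindphi 1 j ω
  have hκ_eq : ∀ (n k : ℕ) (ω : Ω), κ n ω = k ↔ (τ k ω ≤ n ∧ n < τ (k + 1) ω) := by
    intro n k ω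
    constructor
    · rintro rfl; exact hκ n ω
    · rintro ⟨h1, h2⟩
      rcases lt_trichotomy (κ n ω) k with h | h | h
      · exfalso
        have hle : τ (κ n ω + 1) ω ≤ τ k ω := (hreg.tau_mono ω).monotone (by omega)
        have h2' := (hκ n ω).2
        omega
      · exact h
      · exfalso
        have hle : τ (k + 1) ω ≤ τ (κ n ω) ω := (hreg.tau_mono ω).monotone (by omega)
        have h1' := (hκ n ω).1
        omega
  have htau_add : ∀ (k : ℕ) (ω : Ω), τ (k + 1) ω = τ k ω + regInt τ k ω := by
    intro k ω
    have h := (hreg.tau_mono ω).monotone (Nat.le_add_right k 1)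
    unfold regInt
    omega
  constructor
  · -- renewal equation
    intro n
    set S : ℕ → Set Ω := fun k => {ω | τ k ω ≤ n ∧ n < τ (k + 1) ω} with hS
    have hS_meas : ∀ k, MeasurableSet (S k) := by
      intro k
      exact MeasurableSet.inter (hτm k measurableSet_Iic) (hτm (k + 1) measurableSet_Ioi)
    have hS_disj : Pairwise (Function.onFun Disjoint S) := by
      intro k k' hkk'
      refine Set.disjoint_left.mpr ?_
      intro ω h1 h2
      exact hkk' (((hκ_eq n k ω).mpr h1).symm.trans ((hκ_eq n k' ω).mpr h2))
    have hS_univ : (⋃ k, S k) = Set.univ := by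
      apply Set.eq_univ_of_forall
      intro ω
      exact Set.mem_iUnion.mpr ⟨κ n ω, hκ n ω⟩
    have hS_decomp : ∀ k, S k = ⋃ m ∈ Finset.range (n + 1),
        ((τ k ⁻¹' {m}) ∩ {ω | n - m < regInt τ k ω}) := by
      intro k
      ext ω
      simp only [Set.mem_iUnion, Set.mem_inter_iff, Set.mem_preimage, Set.mem_singleton_iff,
        Finset.mem_range, Set.mem_setOf_eq, hS]
      constructor
      · rintro ⟨h1, h2⟩
        have h3 := htau_add k ω
        exact ⟨τ k ω, by omega, rfl, by omega⟩
      · rintro ⟨m, hm, rfl, h2⟩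
        have h3 := htau_add k ω
        omega
    have hpiece : ∀ k m j : ℕ,
        ∫⁻ ω in (τ k ⁻¹' {m}) ∩ {ω | j < regInt τ k ω},
          ENNReal.ofReal (XiNorm X τ k ω ^ r * (regInt τ k ω : ℝ) ^ ℓ) ∂P
        = P (τ k ⁻¹' {m}) * b j := by
      intro k m j
      have hA : MeasurableSet (τ k ⁻¹' {m}) := hτm k (measurableSet_singleton m)
      have hdisj : Disjoint (Finset.range k) ({k} : Finset ℕ) := by
        simp [Finset.disjoint_singleton_right]
      have hh₁m : Measurable (fun v : ({x // x ∈ Finset.range k} → ℕ × (ℕ → Fin d → ℝ)) =>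
          if (∑ i : {x // x ∈ Finset.range k}, (v i).1) = m then (1 : ℝ≥0∞) else 0) := by
        refine Measurable.ite ?_ measurable_const measurable_const
        exact (Finset.measurable_sum Finset.univ fun i _ =>
          measurable_fst.comp (measurable_pi_apply i)) (measurableSet_singleton m)
      have hh₂m : Measurable (fun v : ({x // x ∈ ({k} : Finset ℕ)} → ℕ × (ℕ → Fin d → ℝ)) =>
          phiFn d r ℓ j (v ⟨k, Finset.mem_singleton_self k⟩)) :=
        (measurable_phiFn d r ℓ j).comp (measurable_pi_apply _)
      have hindFG : IndepFun
          (Set.indicator (τ k ⁻¹' {m}) (fun _ => (1 : ℝ≥0∞)))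
          (fun ω => phiFn d r ℓ j (block X τ k ω)) P := by
        have hind0 := hreg.indep.indepFun_finset (Finset.range k) {k} hdisj hBmeas
        have h := hind0.comp hh₁m hh₂m
        convert h using 1
        · funext ω
          have hsum : (∑ i : {x // x ∈ Finset.range k}, (block X τ (i : ℕ) ω).1) = τ k ω := by
            rw [Finset.sum_coe_sort (Finset.range k) (fun i => (block X τ i ω).1)]
            exact (tau_eq_sum hreg.tau_zero hreg.tau_mono k ω).symm
          simp only [Function.comp_apply]
          by_cases h1 : τ k ω = m
          · rw [Set.indicator_of_mem (show ω ∈ τ k ⁻¹' {m} from h1),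
              if_pos (by rw [hsum]; exact h1)]
          · rw [Set.indicator_of_notMem (show ω ∉ τ k ⁻¹' {m} from h1),
              if_neg (by rw [hsum]; exact h1)]
        · rfl
      have hptwise : ∀ ω, Set.indicator ((τ k ⁻¹' {m}) ∩ {ω | j < regInt τ k ω})
          (fun ω => ENNReal.ofReal (XiNorm X τ k ω ^ r * (regInt τ k ω : ℝ) ^ ℓ)) ω
          = Set.indicator (τ k ⁻¹' {m}) (fun _ => (1 : ℝ≥0∞)) ω
            * phiFn d r ℓ j (block X τ k ω) := by
        intro ω
        by_cases h1 : τ k ω = m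
        · rw [Set.indicator_of_mem (show ω ∈ τ k ⁻¹' {m} from h1), one_mul]
          by_cases h2 : j < regInt τ k ω
          · rw [Set.indicator_of_mem
              (Set.mem_inter (show ω ∈ τ k ⁻¹' {m} from h1)
                (show ω ∈ {ω | j < regInt τ k ω} from h2)), hgphi k ω]
            simp only [phiFn, block]
            exact (if_pos h2).symm
          · rw [Set.indicator_of_notMem
              (show ω ∉ (τ k ⁻¹' {m}) ∩ {ω | j < regInt τ k ω} from fun hc => h2 hc.2)]
            simp only [phiFn, block]
            exact (if_neg h2).symm
        · rw [Set.indicator_of_notMem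
              (show ω ∉ (τ k ⁻¹' {m}) ∩ {ω | j < regInt τ k ω} from fun hc => h1 hc.1),
            Set.indicator_of_notMem (show ω ∉ τ k ⁻¹' {m} from h1), zero_mul]
      rw [← lintegral_indicator (hA.inter (hBset k j)), lintegral_congr hptwise]
      have hfac : ∫⁻ ω, Set.indicator (τ k ⁻¹' {m}) (fun _ => (1 : ℝ≥0∞)) ω
            * phiFn d r ℓ j (block X τ k ω) ∂P
          = (∫⁻ ω, Set.indicator (τ k ⁻¹' {m}) (fun _ => (1 : ℝ≥0∞)) ω ∂P)
            * ∫⁻ ω, phiFn d r ℓ j (block X τ k ω) ∂P :=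
        lintegral_mul_eq_lintegral_mul_lintegral_of_indepFun''
          (measurable_const.indicator hA).aemeasurable
          ((measurable_phiFn d r ℓ j).comp (hBmeas k)).aemeasurable hindFG
      rw [hfac, lintegral_indicator_const hA (1 : ℝ≥0∞), one_mul]
      congr 1
      rw [hbphi j]
      exact ((hIdent k).comp (measurable_phiFn d r ℓ j)).lintegral_eq
    rw [ha n]
    calc ∫⁻ ω, ENNReal.ofReal (XiNorm X τ (κ n ω) ω ^ r * (regInt τ (κ n ω) ω : ℝ) ^ ℓ) ∂P
        = ∫⁻ ω in ⋃ k, S k,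
            ENNReal.ofReal (XiNorm X τ (κ n ω) ω ^ r * (regInt τ (κ n ω) ω : ℝ) ^ ℓ) ∂P := by
          rw [hS_univ, Measure.restrict_univ]
      _ = ∑' k, ∫⁻ ω in S k,
            ENNReal.ofReal (XiNorm X τ (κ n ω) ω ^ r * (regInt τ (κ n ω) ω : ℝ) ^ ℓ) ∂P :=
          lintegral_iUnion hS_meas hS_disj _
      _ = ∑' k, ∫⁻ ω in S k,
            ENNReal.ofReal (XiNorm X τ k ω ^ r * (regInt τ k ω : ℝ) ^ ℓ) ∂P := by
          refine tsum_congr fun k => setLIntegral_congr_fun (hS_meas k) ?_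
          intro ω hω
          have hκk : κ n ω = k := (hκ_eq n k ω).mpr hω
          simp only [hκk]
      _ = ∑' k, ∑ m ∈ Finset.range (n + 1), P (τ k ⁻¹' {m}) * b (n - m) := by
          refine tsum_congr fun k => ?_
          rw [hS_decomp k, lintegral_biUnion_finset ?_ ?_]
          · exact Finset.sum_congr rfl fun m _ => hpiece k m (n - m)
          · intro m _ m' _ hne
            refine Set.disjoint_left.mpr ?_
            intro ω h1 h2
            exact hne (h1.1.symm.trans h2.1)
          · intro m _
            exact (hτm k (measurableSet_singleton m)).inter (hBset k (n - m))
      _ = ∑ m ∈ Finset.range (n + 1), ∑' k, P (τ k ⁻¹' {m}) * b (n - m) :=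
          Summable.tsum_finsetSum fun m _ => ENNReal.summable
      _ = ∑ m ∈ Finset.range (n + 1), b (n - m) * u m := by
          refine Finset.sum_congr rfl fun m _ => ?_
          rw [ENNReal.tsum_mul_right, mul_comm]
          congr 1
          rw [hu m]
          rfl
  · -- sum of b
    have h1 : ∀ n : ℕ, b n = ∫⁻ ω, Set.indicator {ω | n < regInt τ 1 ω}
        (fun ω => ENNReal.ofReal (XiNorm X τ 1 ω ^ r * (regInt τ 1 ω : ℝ) ^ ℓ)) ω ∂P := by
      intro n; rw [hb n, ← lintegral_indicator (hBset 1 n)]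
    simp only [h1]
    rw [← lintegral_tsum fun n => ((hgmeas 1).indicator (hBset 1 n)).aemeasurable]
    apply lintegral_congr
    intro ω
    have hsum : (∑' n : ℕ, Set.indicator {ω | n < regInt τ 1 ω}
        (fun ω => ENNReal.ofReal (XiNorm X τ 1 ω ^ r * (regInt τ 1 ω : ℝ) ^ ℓ)) ω)
        = (regInt τ 1 ω : ℝ≥0∞)
          * ENNReal.ofReal (XiNorm X τ 1 ω ^ r * (regInt τ 1 ω : ℝ) ^ ℓ) := by
      have hone : ∀ n : ℕ, Set.indicator {ω | n < regInt τ 1 ω}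
          (fun ω => ENNReal.ofReal (XiNorm X τ 1 ω ^ r * (regInt τ 1 ω : ℝ) ^ ℓ)) ω
          = if n < regInt τ 1 ω
            then ENNReal.ofReal (XiNorm X τ 1 ω ^ r * (regInt τ 1 ω : ℝ) ^ ℓ) else 0 :=
        fun n => Set.indicator_apply _ _ _
      rw [tsum_congr hone, tsum_eq_sum (s := Finset.range (regInt τ 1 ω))
        (fun n hn => if_neg (by simpa using hn))]
      rw [Finset.sum_congr rfl fun n hn => if_pos (Finset.mem_range.mp hn)]
      rw [Finset.sum_const, Finset.card_range, nsmul_eq_mul]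
    rw [hsum, ← ENNReal.ofReal_natCast (regInt τ 1 ω),
      ← ENNReal.ofReal_mul (Nat.cast_nonneg _)]
    congr 1
    ring


end
end

section
/- Under Assumption (A), there exists a constant C (independent of n) such that E[‖X^{(n)} − V^{(n)}‖²_{2,[0,T]}] ≤ C for all n ≥ 1, where V^{(n)}_t := n^{−1/2} X_{τ_{κ(nt)}} and ‖·‖_{2,[0,T]} is the 2-variation norm. -/
open MeasureTheory ProbabilityTheory Filter Finset
open scoped ENNReal Topology

noncomputable section

/-- piecewise linear interpolation of a sequence -/
def lin (y : ℕ → ℝ) (u : ℝ) : ℝ :=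
  y ⌊u⌋₊ + (u - ⌊u⌋₊) * (y (⌊u⌋₊ + 1) - y ⌊u⌋₊)

lemma lin_lip (y : ℕ → ℝ) (L : ℝ) :
    ∀ N : ℕ, ∀ u v : ℝ, 0 ≤ u → u ≤ v → ⌊v⌋₊ - ⌊u⌋₊ = N →
    (∀ j : ℕ, ⌊u⌋₊ ≤ j → j ≤ ⌊v⌋₊ → |y (j + 1) - y j| ≤ L) →
    |lin y v - lin y u| ≤ L * (v - u) := by
  intro N
  induction N with
  | zero =>
    intro u v hu huv hN hsteps
    have hle : ⌊u⌋₊ ≤ ⌊v⌋₊ := Nat.floor_le_floor huv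
    have hfl : ⌊v⌋₊ = ⌊u⌋₊ := by omega
    have hL : |y (⌊u⌋₊ + 1) - y ⌊u⌋₊| ≤ L := hsteps _ le_rfl hle
    have : lin y v - lin y u = (v - u) * (y (⌊u⌋₊ + 1) - y ⌊u⌋₊) := by
      simp only [lin, hfl]; ring
    rw [this, abs_mul, abs_of_nonneg (by linarith)]
    calc (v - u) * |y (⌊u⌋₊ + 1) - y ⌊u⌋₊| ≤ (v - u) * L := by
          exact mul_le_mul_of_nonneg_left hL (by linarith)
      _ = L * (v - u) := by ring
  | succ N ih =>
    intro u v hu huv hN hsteps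
    have hle : ⌊u⌋₊ ≤ ⌊v⌋₊ := Nat.floor_le_floor huv
    set w : ℝ := ((⌊u⌋₊ + 1 : ℕ) : ℝ) with hw
    have hfw : ⌊w⌋₊ = ⌊u⌋₊ + 1 := Nat.floor_natCast _
    have huw : u ≤ w := by
      have := Nat.lt_floor_add_one u
      push_cast [hw]; push_cast at this; linarith
    have hwv : w ≤ v := by
      have h1 : ⌊u⌋₊ + 1 ≤ ⌊v⌋₊ := by omega
      have h2 : ((⌊u⌋₊ + 1 : ℕ) : ℝ) ≤ (⌊v⌋₊ : ℝ) := by exact_mod_cast h1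
      have h3 : (⌊v⌋₊ : ℝ) ≤ v := Nat.floor_le (le_trans hu huv)
      linarith
    have hIH : |lin y v - lin y w| ≤ L * (v - w) := by
      refine ih w v (by positivity) hwv (by omega) ?_
      intro j hj1 hj2
      exact hsteps j (by omega) hj2
    have hstep0 : |y (⌊u⌋₊ + 1) - y ⌊u⌋₊| ≤ L := hsteps _ le_rfl (by omega)
    have hlinw : lin y w = y (⌊u⌋₊ + 1) := by
      rw [lin, hfw, hw]; push_cast; ring
    have hwu : lin y w - lin y u = (w - u) * (y (⌊u⌋₊ + 1) - y ⌊u⌋₊) := by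
      rw [hlinw]; simp only [lin]
      have : w - u = 1 - (u - (⌊u⌋₊ : ℝ)) := by push_cast [hw]; ring
      rw [this]; ring
    have h2 : |lin y w - lin y u| ≤ L * (w - u) := by
      rw [hwu, abs_mul, abs_of_nonneg (by linarith)]
      calc (w - u) * |y (⌊u⌋₊ + 1) - y ⌊u⌋₊| ≤ (w - u) * L :=
            mul_le_mul_of_nonneg_left hstep0 (by linarith)
        _ = L * (w - u) := by ring
    calc |lin y v - lin y u| ≤ |lin y v - lin y w| + |lin y w - lin y u| := abs_sub_le _ _ _
      _ ≤ L * (v - w) + L * (w - u) := add_le_add hIH h2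
      _ = L * (v - u) := by ring


set_option maxHeartbeats 1000000 in
lemma det_bound {d : ℕ} (x : ℕ → Fin d → ℝ) (a : ℕ → ℕ) (ka : ℝ → ℕ)
    (ha0 : a 0 = 0) (hamono : StrictMono a)
    (hka : ∀ u : ℝ, 0 ≤ u → (a (ka u) : ℝ) ≤ u ∧ u < a (ka u + 1))
    (c : Fin d → ℕ → ℝ)
    (hc : ∀ i k j, a k ≤ j → j ≤ a (k + 1) → |x j i - x (a k) i| ≤ c i k)
    (n : ℕ) (hn : 1 ≤ n) (T : ℝ) (hT : 0 ≤ T)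
    (m : ℕ) (t : ℕ → ℝ) (hmono : Monotone t) (h0 : t 0 = 0) (hm : t m = T) :
    ∑ i ∈ Finset.range m,
      ‖(interp x n (t (i + 1)) - (Real.sqrt n)⁻¹ • x (a (ka ((n : ℝ) * t (i + 1))))) -
       (interp x n (t i) - (Real.sqrt n)⁻¹ • x (a (ka ((n : ℝ) * t i))))‖ ^ 2
      ≤ (48 / n) * ∑ k ∈ Finset.range (⌊(n : ℝ) * T⌋₊ + 1),
          (∑ i, c i k ^ 2) * ((a (k + 1) - a k : ℕ) : ℝ) := by
  have hnR : (0 : ℝ) < n := by exact_mod_cast hn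
  set sn : ℝ := Real.sqrt n with hsn
  have hsn0 : 0 < sn := Real.sqrt_pos.mpr hnR
  have hsnsq : sn * sn = n := Real.mul_self_sqrt hnR.le
  set f : ℝ → (Fin d → ℝ) :=
    fun s => interp x n s - (Real.sqrt n)⁻¹ • x (a (ka ((n : ℝ) * s))) with hf
  set W : ℕ → ℝ := fun k => ∑ i, c i k ^ 2 with hW
  set R : ℕ → ℝ := fun k => Real.sqrt (W k) with hR
  set Tk : ℕ → ℝ := fun k => ((a (k + 1) : ℝ) - a k) with hTk
  have hc0 : ∀ i k, 0 ≤ c i k := by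
    intro i k
    have := hc i k (a k) le_rfl (hamono (Nat.lt_succ_self k)).le
    simpa using this
  have hW0 : ∀ k, 0 ≤ W k := fun k => Finset.sum_nonneg fun i _ => sq_nonneg _
  have hR0 : ∀ k, 0 ≤ R k := fun k => Real.sqrt_nonneg _
  have hRsq : ∀ k, R k * R k = W k := fun k => Real.mul_self_sqrt (hW0 k)
  have hcR : ∀ i k, c i k ≤ R k := by
    intro i k
    have h1 : c i k ^ 2 ≤ W k :=
      Finset.single_le_sum (f := fun i => c i k ^ 2) (fun j _ => sq_nonneg _) (Finset.mem_univ i)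
    calc c i k = Real.sqrt (c i k ^ 2) := (Real.sqrt_sq (hc0 i k)).symm
      _ ≤ R k := Real.sqrt_le_sqrt h1
  have hTk1 : ∀ k, 1 ≤ Tk k := by
    intro k
    have : a k + 1 ≤ a (k + 1) := hamono (Nat.lt_succ_self k)
    have : (a k : ℝ) + 1 ≤ a (k + 1) := by exact_mod_cast this
    simp only [hTk]; linarith
  have hstep : ∀ i k j, a k ≤ j → j + 1 ≤ a (k + 1) → |x (j + 1) i - x j i| ≤ 2 * c i k := by
    intro i k j h1 h2
    have b1 := hc i k j h1 (by omega)
    have b2 := hc i k (j + 1) (by omega) h2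
    calc |x (j + 1) i - x j i| = |(x (j + 1) i - x (a k) i) - (x j i - x (a k) i)| := by ring_nf
      _ ≤ |x (j + 1) i - x (a k) i| + |x j i - x (a k) i| := abs_sub _ _
      _ ≤ 2 * c i k := by linarith
  have hfloor : ∀ u : ℝ, 0 ≤ u → a (ka u) ≤ ⌊u⌋₊ ∧ ⌊u⌋₊ + 1 ≤ a (ka u + 1) := by
    intro u hu
    obtain ⟨h1, h2⟩ := hka u hu
    constructor
    · exact Nat.le_floor h1
    · have : (⌊u⌋₊ : ℝ) ≤ u := Nat.floor_le hu
      have : (⌊u⌋₊ : ℝ) < a (ka u + 1) := lt_of_le_of_lt this h2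
      exact_mod_cast this
  -- pointwise coordinate bound
  have hpointc : ∀ s : ℝ, 0 ≤ s → ∀ i, |f s i| ≤ 3 * c i (ka ((n : ℝ) * s)) / sn := by
    intro s hs i
    set u : ℝ := (n : ℝ) * s with hu
    have hu0 : 0 ≤ u := by positivity
    set k := ka u with hk
    obtain ⟨hfl1, hfl2⟩ := hfloor u hu0
    rw [← hk] at hfl1 hfl2
    have hb1 : |x ⌊u⌋₊ i - x (a k) i| ≤ c i k := hc i k _ hfl1 (by omega)
    have hb2 : |x (⌊u⌋₊ + 1) i - x ⌊u⌋₊ i| ≤ 2 * c i k := hstep i k _ hfl1 hfl2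
    have hfrac0 : 0 ≤ u - ⌊u⌋₊ := by
      have := Nat.floor_le hu0; linarith
    have hfrac1 : u - ⌊u⌋₊ ≤ 1 := by
      have := Nat.lt_floor_add_one u; linarith
    have hval : f s i = sn⁻¹ * (x ⌊u⌋₊ i - x (a k) i)
        + ((u - ⌊u⌋₊) / sn) * (x (⌊u⌋₊ + 1) i - x ⌊u⌋₊ i) := by
      simp only [hf, interp, Pi.sub_apply, Pi.add_apply, Pi.smul_apply, smul_eq_mul, ← hu, ← hk,
        ← hsn]
      ring
    rw [hval]
    have e1 : |sn⁻¹ * (x ⌊u⌋₊ i - x (a k) i)| ≤ sn⁻¹ * c i k := by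
      rw [abs_mul, abs_of_nonneg (by positivity)]
      exact mul_le_mul_of_nonneg_left hb1 (by positivity)
    have e2 : |((u - ⌊u⌋₊) / sn) * (x (⌊u⌋₊ + 1) i - x ⌊u⌋₊ i)| ≤ sn⁻¹ * (2 * c i k) := by
      rw [abs_mul, abs_of_nonneg (by positivity)]
      calc (u - ⌊u⌋₊) / sn * |x (⌊u⌋₊ + 1) i - x ⌊u⌋₊ i| ≤ (1 / sn) * (2 * c i k) := by
            apply mul_le_mul (by rw [div_le_div_iff₀ hsn0 hsn0]; nlinarith) hb2 (abs_nonneg _)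
            positivity
        _ = sn⁻¹ * (2 * c i k) := by ring
    calc |sn⁻¹ * (x ⌊u⌋₊ i - x (a k) i) + (u - ⌊u⌋₊) / sn * (x (⌊u⌋₊ + 1) i - x ⌊u⌋₊ i)|
        ≤ |sn⁻¹ * (x ⌊u⌋₊ i - x (a k) i)| + |(u - ⌊u⌋₊) / sn * (x (⌊u⌋₊ + 1) i - x ⌊u⌋₊ i)| :=
          abs_add_le _ _
      _ ≤ sn⁻¹ * c i k + sn⁻¹ * (2 * c i k) := add_le_add e1 e2
      _ = 3 * c i k / sn := by field_simp; ring
  have hpoint : ∀ s : ℝ, 0 ≤ s → ‖f s‖ ≤ 3 * R (ka ((n : ℝ) * s)) / sn := by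
    intro s hs
    rw [pi_norm_le_iff_of_nonneg (by positivity)]
    intro i
    calc ‖f s i‖ = |f s i| := rfl
      _ ≤ 3 * c i (ka ((n : ℝ) * s)) / sn := hpointc s hs i
      _ ≤ 3 * R (ka ((n : ℝ) * s)) / sn := by
          gcongr
          exact hcR i _
  -- Lipschitz bound within a block
  have hlip : ∀ s s' : ℝ, 0 ≤ s → s ≤ s' → ka ((n : ℝ) * s) = ka ((n : ℝ) * s') →
      ‖f s' - f s‖ ≤ 2 * R (ka ((n : ℝ) * s)) * ((n : ℝ) * s' - (n : ℝ) * s) / sn := by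
    intro s s' hs hss hkk
    set u : ℝ := (n : ℝ) * s with hu
    set v : ℝ := (n : ℝ) * s' with hv
    have hu0 : 0 ≤ u := by positivity
    have huv : u ≤ v := by
      simp only [hu, hv]
      exact mul_le_mul_of_nonneg_left hss (by positivity)
    set k := ka u with hk
    obtain ⟨hfu1, hfu2⟩ := hfloor u hu0
    obtain ⟨hfv1, hfv2⟩ := hfloor v (le_trans hu0 huv)
    rw [← hk] at hfu1 hfu2
    rw [← hkk] at hfv1 hfv2
    have h2R : (0 : ℝ) ≤ 2 * R (ka ((n : ℝ) * s)) * ((n : ℝ) * s' - (n : ℝ) * s) / sn := by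
      apply div_nonneg _ hsn0.le
      apply mul_nonneg (mul_nonneg (by norm_num) (hR0 _))
      have : (n : ℝ) * s ≤ (n : ℝ) * s' := mul_le_mul_of_nonneg_left hss (Nat.cast_nonneg n)
      linarith
    rw [pi_norm_le_iff_of_nonneg h2R]
    intro i
    have hcoord : (f s' - f s) i = sn⁻¹ * (lin (fun j => x j i) v - lin (fun j => x j i) u) := by
      simp only [hf, interp, lin, Pi.sub_apply, Pi.add_apply, Pi.smul_apply, smul_eq_mul,
        ← hu, ← hv, ← hk, ← hkk, ← hsn]
      ring
    have hL : |lin (fun j => x j i) v - lin (fun j => x j i) u| ≤ (2 * c i k) * (v - u) := by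
      apply lin_lip (fun j => x j i) (2 * c i k) (⌊v⌋₊ - ⌊u⌋₊) u v hu0 huv rfl
      intro j hj1 hj2
      exact hstep i k j (by omega) (by omega)
    calc ‖(f s' - f s) i‖ = |(f s' - f s) i| := rfl
      _ = sn⁻¹ * |lin (fun j => x j i) v - lin (fun j => x j i) u| := by
          rw [hcoord, abs_mul, abs_of_nonneg (by positivity)]
      _ ≤ sn⁻¹ * ((2 * c i k) * (v - u)) := by
          exact mul_le_mul_of_nonneg_left hL (by positivity)
      _ ≤ sn⁻¹ * (2 * R k * (v - u)) := by
          apply mul_le_mul_of_nonneg_left _ (inv_nonneg.mpr hsn0.le)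
          apply mul_le_mul_of_nonneg_right _ (by linarith)
          have : c i k ≤ R k := hcR i k
          linarith
      _ = 2 * R k * (v - u) / sn := by ring
  -- monotonicity of ka
  have hkamono : ∀ u v : ℝ, 0 ≤ u → u ≤ v → ka u ≤ ka v := by
    intro u v hu huv
    by_contra hcon
    push_neg at hcon
    have h1 : ka v + 1 ≤ ka u := hcon
    have h2 : a (ka v + 1) ≤ a (ka u) := hamono.monotone h1
    have h3 : (a (ka u) : ℝ) ≤ u := (hka u hu).1
    have h4 : v < a (ka v + 1) := (hka v (le_trans hu huv)).2
    have : (a (ka v + 1) : ℝ) ≤ a (ka u) := by exact_mod_cast h2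
    linarith
  have hka_le_floor : ∀ u : ℝ, 0 ≤ u → ka u ≤ ⌊u⌋₊ := by
    intro u hu
    have h1 : ka u ≤ a (ka u) := hamono.le_apply
    have h2 : a (ka u) ≤ ⌊u⌋₊ := (hfloor u hu).1
    omega
  -- the potential function induction
  set u : ℕ → ℝ := fun i => (n : ℝ) * t i with hud
  set kk : ℕ → ℕ := fun i => ka (u i) with hkk
  have ht0 : ∀ i, 0 ≤ t i := fun i => h0 ▸ hmono (Nat.zero_le i)
  have hu0 : ∀ i, 0 ≤ u i := fun i => mul_nonneg (Nat.cast_nonneg n) (ht0 i)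
  have humono : ∀ i j, i ≤ j → u i ≤ u j :=
    fun i j h => mul_le_mul_of_nonneg_left (hmono h) (Nat.cast_nonneg n)
  have hkkmono : ∀ i j, i ≤ j → kk i ≤ kk j :=
    fun i j h => hkamono _ _ (hu0 i) (humono i j h)
  have hule : ∀ i, (a (kk i) : ℝ) ≤ u i := fun i => (hka (u i) (hu0 i)).1
  have hult : ∀ i, u i < a (kk i + 1) := fun i => (hka (u i) (hu0 i)).2
  set Φ : ℕ → ℝ := fun i =>
    (36 / n) * (∑ j ∈ range (kk i + 1), W j) +
      (12 / n) * ((∑ j ∈ range (kk i), W j * Tk j) + W (kk i) * (u i - a (kk i))) with hΦ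
  have hWT0 : ∀ j, 0 ≤ W j * Tk j := fun j => mul_nonneg (hW0 j) (by linarith [hTk1 j])
  have key : ∀ i, i ≤ m →
      (∑ j ∈ range i, ‖f (t (j + 1)) - f (t j)‖ ^ 2) + (18 / n) * W (kk i) ≤ Φ i := by
    intro i
    induction i with
    | zero =>
      intro _
      simp only [range_zero, sum_empty, zero_add, hΦ]
      have h1 : W (kk 0) ≤ ∑ j ∈ range (kk 0 + 1), W j :=
        Finset.single_le_sum (f := fun j => W j) (fun j _ => hW0 j) (self_mem_range_succ _)
      have h2 : (0 : ℝ) ≤ ∑ j ∈ range (kk 0), W j * Tk j := Finset.sum_nonneg fun j _ => hWT0 j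
      have h3 : (0 : ℝ) ≤ W (kk 0) * (u 0 - a (kk 0)) :=
        mul_nonneg (hW0 _) (by linarith [hule 0])
      have h4 : (0:ℝ) < 36 / n := by positivity
      have h5 : (18 : ℝ) / n * W (kk 0) ≤ 36 / n * W (kk 0) := by
        apply mul_le_mul_of_nonneg_right _ (hW0 _)
        rw [div_le_div_iff_of_pos_right] <;> [norm_num; positivity]
      have h6 := mul_le_mul_of_nonneg_left h1 (le_of_lt h4)
      have h7 : (0:ℝ) ≤ 12 / n * ((∑ j ∈ range (kk 0), W j * Tk j) + W (kk 0) * (u 0 - a (kk 0))) :=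
        mul_nonneg (by positivity) (add_nonneg h2 h3)
      linarith
    | succ i ih =>
      intro him
      have hi := ih (by omega)
      rw [sum_range_succ]
      have hklei : kk i ≤ kk (i + 1) := hkkmono i (i + 1) (by omega)
      rcases eq_or_lt_of_le hklei with heq | hlt
      · -- same block
        set k := kk i with hkdef
        have hnormA : ‖f (t (i + 1)) - f (t i)‖ ≤ 6 * R k / sn := by
          calc ‖f (t (i + 1)) - f (t i)‖ ≤ ‖f (t (i + 1))‖ + ‖f (t i)‖ := norm_sub_le _ _
            _ ≤ 3 * R (kk (i+1)) / sn + 3 * R k / sn :=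
                add_le_add (hpoint _ (ht0 _)) (hpoint _ (ht0 _))
            _ = 6 * R k / sn := by rw [← heq]; ring
        have hnormB : ‖f (t (i + 1)) - f (t i)‖ ≤ 2 * R k * (u (i + 1) - u i) / sn :=
          hlip (t i) (t (i + 1)) (ht0 i) (hmono (by omega)) (hkdef.symm.trans heq)
        have hsq : ‖f (t (i + 1)) - f (t i)‖ ^ 2 ≤ 12 / n * (W k * (u (i + 1) - u i)) := by
          have hn0 : (0:ℝ) ≤ ‖f (t (i + 1)) - f (t i)‖ := norm_nonneg _
          have hA0 : (0:ℝ) ≤ 6 * R k / sn :=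
            div_nonneg (mul_nonneg (by norm_num) (hR0 k)) hsn0.le
          have := mul_le_mul hnormA hnormB hn0 hA0
          calc ‖f (t (i + 1)) - f (t i)‖ ^ 2 = ‖f (t (i + 1)) - f (t i)‖ * ‖f (t (i + 1)) - f (t i)‖ := sq _
            _ ≤ (6 * R k / sn) * (2 * R k * (u (i + 1) - u i) / sn) := this
            _ = 12 * (R k * R k) * (u (i + 1) - u i) / (sn * sn) := by ring
            _ = 12 / n * (W k * (u (i + 1) - u i)) := by rw [hRsq, hsnsq]; ring
        have hΦdiff : Φ (i + 1) = Φ i + 12 / n * (W k * (u (i + 1) - u i)) := by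
          simp only [hΦ, ← heq, ← hkdef]
          ring
        rw [← heq, hΦdiff]
        linarith
      · -- block change: kk i < kk (i+1)
        set k := kk i with hkdef
        set k' := kk (i + 1) with hk'def
        have hnorm2 : ‖f (t (i + 1)) - f (t i)‖ ^ 2 ≤ 18 / n * (W k + W k') := by
          have hA : ‖f (t (i + 1))‖ ≤ 3 * R k' / sn := hpoint _ (ht0 _)
          have hB : ‖f (t i)‖ ≤ 3 * R k / sn := hpoint _ (ht0 _)
          have h1 : ‖f (t (i + 1)) - f (t i)‖ ≤ 3 * R k' / sn + 3 * R k / sn :=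
            le_trans (norm_sub_le _ _) (add_le_add hA hB)
          have h2 : ‖f (t (i + 1)) - f (t i)‖ ^ 2 ≤ (3 * R k' / sn + 3 * R k / sn) ^ 2 :=
            pow_le_pow_left₀ (norm_nonneg _) h1 2
          have e : sn ^ 2 = (n : ℝ) := by rw [sq]; exact hsnsq
          have h3 : (3 * R k' + 3 * R k) ^ 2 ≤ 18 * (W k + W k') := by
            nlinarith [hRsq k, hRsq k', sq_nonneg (R k - R k')]
          calc ‖f (t (i + 1)) - f (t i)‖ ^ 2 ≤ (3 * R k' / sn + 3 * R k / sn) ^ 2 := h2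
            _ = (3 * R k' + 3 * R k) ^ 2 / n := by rw [← add_div, div_pow, e]
            _ ≤ 18 * (W k + W k') / n := by
                rw [div_le_div_iff_of_pos_right hnR]; exact h3
            _ = 18 / n * (W k + W k') := by ring
        -- potential increase
        have hsum1 : ∑ j ∈ range (k + 1), W j + W k' ≤ ∑ j ∈ range (k' + 1), W j := by
          have hsplit : ∑ j ∈ range (k + 1), W j + ∑ j ∈ Ico (k + 1) (k' + 1), W j
              = ∑ j ∈ range (k' + 1), W j := by
            simp only [Finset.range_eq_Ico]
            exact Finset.sum_Ico_consecutive _ (by omega) (by omega)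
          have hmem : W k' ≤ ∑ j ∈ Ico (k + 1) (k' + 1), W j :=
            Finset.single_le_sum (f := fun j => W j) (fun j _ => hW0 j)
              (by rw [Finset.mem_Ico]; omega)
          linarith
        have hsum2 : ∑ j ∈ range k, W j * Tk j + W k * (u i - a k) ≤ ∑ j ∈ range k', W j * Tk j := by
          have hsplit : ∑ j ∈ range k, (W j * Tk j) + ∑ j ∈ Ico k k', (W j * Tk j)
              = ∑ j ∈ range k', (W j * Tk j) := by
            simp only [Finset.range_eq_Ico]
            exact Finset.sum_Ico_consecutive _ (by omega) (by omega)
          have hmem : W k * Tk k ≤ ∑ j ∈ Ico k k', (W j * Tk j) :=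
            Finset.single_le_sum (f := fun j => W j * Tk j) (fun j _ => hWT0 j)
              (by rw [Finset.mem_Ico]; omega)
          have hub : W k * (u i - a k) ≤ W k * Tk k := by
            apply mul_le_mul_of_nonneg_left _ (hW0 k)
            have := hult i
            simp only [hTk]
            rw [← hkdef] at this
            linarith
          linarith
        have hpos3 : 0 ≤ W k' * (u (i + 1) - a k') :=
          mul_nonneg (hW0 _) (by linarith [hule (i + 1)])
        have hΦle : Φ i + 36 / n * W k' ≤ Φ (i + 1) := by
          simp only [hΦ, ← hkdef, ← hk'def]
          have c1 : (36 / n) * (∑ j ∈ range (k + 1), W j) + 36 / n * W k'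
              ≤ (36 / n) * (∑ j ∈ range (k' + 1), W j) := by
            have := mul_le_mul_of_nonneg_left hsum1 (show (0:ℝ) ≤ 36 / n by positivity)
            rw [mul_add] at this
            linarith
          have c2 : (12 / n) * ((∑ j ∈ range k, W j * Tk j) + W k * (u i - a k))
              ≤ (12 / n) * ((∑ j ∈ range k', W j * Tk j) + W k' * (u (i + 1) - a k')) := by
            apply mul_le_mul_of_nonneg_left _ (show (0:ℝ) ≤ 12 / n by positivity)
            linarith
          linarith
        calc (∑ j ∈ range i, ‖f (t (j + 1)) - f (t j)‖ ^ 2) + ‖f (t (i + 1)) - f (t i)‖ ^ 2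
            + 18 / n * W k'
            ≤ (Φ i - 18 / n * W k) + 18 / n * (W k + W k') + 18 / n * W k' := by
              linarith [hnorm2]
          _ = Φ i + 36 / n * W k' := by ring
          _ ≤ Φ (i + 1) := hΦle
  -- conclusion
  have hfinal := key m le_rfl
  set Km := kk m with hKm
  have hKmle : Km ≤ ⌊(n : ℝ) * T⌋₊ := by
    have h1 := hka_le_floor (u m) (hu0 m)
    have h2 : ⌊u m⌋₊ = ⌊(n : ℝ) * T⌋₊ := by
      have : u m = (n : ℝ) * T := by simp only [hud, hm]
      rw [this]
    rw [h2] at h1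
    exact h1
  have hΦbound : Φ m ≤ (48 / n) * ∑ k ∈ range (⌊(n : ℝ) * T⌋₊ + 1), W k * Tk k := by
    have b1 : ∑ j ∈ range (Km + 1), W j ≤ ∑ j ∈ range (Km + 1), W j * Tk j := by
      apply Finset.sum_le_sum
      intro j _
      nlinarith [hW0 j, hTk1 j]
    have b2 : (∑ j ∈ range Km, W j * Tk j) + W Km * (u m - a Km)
        ≤ ∑ j ∈ range (Km + 1), W j * Tk j := by
      rw [sum_range_succ]
      have := hult m
      have hub : W Km * (u m - a Km) ≤ W Km * Tk Km := by
        apply mul_le_mul_of_nonneg_left _ (hW0 Km)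
        simp only [hTk]
        rw [← hKm] at this
        linarith
      linarith
    have b3 : ∑ j ∈ range (Km + 1), W j * Tk j ≤ ∑ k ∈ range (⌊(n : ℝ) * T⌋₊ + 1), W k * Tk k := by
      apply Finset.sum_le_sum_of_subset_of_nonneg
      · exact Finset.range_subset_range.mpr (by omega)
      · intro j _ _; exact hWT0 j
    have h36 : (0:ℝ) ≤ 36 / n := by positivity
    have h12 : (0:ℝ) ≤ 12 / n := by positivity
    simp only [hΦ, ← hKm]
    calc (36 / n) * (∑ j ∈ range (Km + 1), W j) +
          (12 / n) * ((∑ j ∈ range Km, W j * Tk j) + W Km * (u m - a Km))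
        ≤ (36 / n) * (∑ j ∈ range (Km + 1), W j * Tk j) +
          (12 / n) * (∑ j ∈ range (Km + 1), W j * Tk j) := by
          have := mul_le_mul_of_nonneg_left b1 h36
          have := mul_le_mul_of_nonneg_left b2 h12
          linarith
      _ = (48 / n) * ∑ j ∈ range (Km + 1), W j * Tk j := by ring
      _ ≤ (48 / n) * ∑ k ∈ range (⌊(n : ℝ) * T⌋₊ + 1), W k * Tk k := by
          exact mul_le_mul_of_nonneg_left b3 (by positivity)
  have hcast : ∀ k, ((a (k + 1) - a k : ℕ) : ℝ) = Tk k := by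
    intro k
    have : a k ≤ a (k + 1) := (hamono (Nat.lt_succ_self k)).le
    simp only [hTk]
    push_cast [Nat.cast_sub this]
    ring
  calc ∑ i ∈ Finset.range m,
      ‖(interp x n (t (i + 1)) - (Real.sqrt n)⁻¹ • x (a (ka ((n : ℝ) * t (i + 1))))) -
       (interp x n (t i) - (Real.sqrt n)⁻¹ • x (a (ka ((n : ℝ) * t i))))‖ ^ 2
      = ∑ j ∈ range m, ‖f (t (j + 1)) - f (t j)‖ ^ 2 := rfl
    _ ≤ Φ m := by
        have h18 : (0:ℝ) ≤ 18 / (n:ℝ) * W Km := mul_nonneg (by positivity) (hW0 Km)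
        exact le_trans (le_add_of_nonneg_right h18) hfinal
    _ ≤ (48 / n) * ∑ k ∈ range (⌊(n : ℝ) * T⌋₊ + 1), W k * Tk k := hΦbound
    _ = (48 / n) * ∑ k ∈ Finset.range (⌊(n : ℝ) * T⌋₊ + 1),
          (∑ i, c i k ^ 2) * ((a (k + 1) - a k : ℕ) : ℝ) := by
        congr 1
        apply Finset.sum_congr rfl
        intro k _
        rw [hcast k]



lemma measurable_uncurry_nat {α γ : Type*} [MeasurableSpace α] [MeasurableSpace γ]
    (f : ℕ × α → γ) (hf : ∀ n, Measurable fun a => f (n, a)) : Measurable f := by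
  have h1 : Measurable fun q : α × ℕ => f (q.2, q.1) :=
    measurable_from_prod_countable_left fun n => hf n
  exact h1.comp measurable_swap

lemma measurable_sup'_range {α : Type*} [MeasurableSpace α] (N : ℕ) (h : ℕ → α → ℝ)
    (hh : ∀ j, Measurable (h j)) :
    Measurable fun ω => (Finset.range (N + 1)).sup' Finset.nonempty_range_add_one (fun j => h j ω) := by
  induction N with
  | zero => simpa using hh 0
  | succ N ih =>
    have heq : (fun ω => (Finset.range (N + 2)).sup' Finset.nonempty_range_add_one (fun j => h j ω))
        = fun ω => (h (N + 1) ω) ⊔ (Finset.range (N + 1)).sup' Finset.nonempty_range_add_one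
            (fun j => h j ω) := by
      funext ω
      apply le_antisymm
      · apply Finset.sup'_le
        intro j hj
        rw [Finset.mem_range] at hj
        rcases Nat.lt_succ_iff_lt_or_eq.mp hj with hj' | hj'
        · exact le_trans (Finset.le_sup' (f := fun j => h j ω) (Finset.mem_range.mpr hj'))
            le_sup_right
        · subst hj'; exact le_sup_left
      · apply sup_le
        · exact Finset.le_sup' (f := fun j => h j ω) (Finset.mem_range.mpr (by omega))
        · apply Finset.sup'_le
          intro j hj
          rw [Finset.mem_range] at hj
          exact Finset.le_sup' (f := fun j => h j ω) (Finset.mem_range.mpr (by omega))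
    rw [heq]
    exact (hh (N + 1)).max ih

set_option maxHeartbeats 2000000 in
/-- under Assumption (A), the 2-variation distance between the
interpolated rescaled process `X^{(n)}` and the skeleton process
`V^{(n)}_t = n^{−1/2} X_{τ_{κ(nt)}}` has second moments bounded uniformly in `n`. -/
theorem two_variation_distance_to_skeleton_bounded {Ω : Type*} [MeasurableSpace Ω]
    (P : Measure Ω) [IsProbabilityMeasure P] {d : ℕ}
    (X : ℕ → Ω → (Fin d → ℝ)) (τ : ℕ → Ω → ℕ)
    (hreg : DelayedRegenerative P X τ) (hA : AssumptionA P X τ)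
    (κ : ℝ → Ω → ℕ)
    (hκ : ∀ u : ℝ, 0 ≤ u → ∀ ω, (τ (κ u ω) ω : ℝ) ≤ u ∧ u < τ (κ u ω + 1) ω)
    (T : ℝ) (hT : 0 < T) :
    ∃ C : ℝ≥0∞, C ≠ ∞ ∧ ∀ n : ℕ, 1 ≤ n →
      ∫⁻ ω, (pVar 2 T (fun t =>
        interp (fun k => X k ω) n t -
          (Real.sqrt n)⁻¹ • X (τ (κ ((n : ℝ) * t) ω) ω) ω)) ^ 2 ∂P ≤ C := by
  classical
  obtain ⟨htau0, htaumono, hmX, hmtau, hindep, hident⟩ := hreg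
  set Y : ℕ → Ω → ℝ := fun k ω => (∑ i, XiC X τ i k ω ^ 2) * (regInt τ k ω : ℝ) with hY
  have hXcomp : ∀ g : Ω → ℕ, Measurable g → Measurable fun ω => X (g ω) ω := by
    intro g hg
    have h1 : Measurable fun p : Ω × ℕ => X p.2 p.1 :=
      measurable_from_prod_countable_left fun j => hmX j
    exact h1.comp (measurable_id.prodMk hg)
  have hXcompi : ∀ (g : Ω → ℕ) (i : Fin d), Measurable g → Measurable fun ω => X (g ω) ω i :=
    fun g i hg => (measurable_pi_apply i).comp (hXcomp g hg)
  have hmreg : ∀ k, Measurable (regInt τ k) := by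
    intro k
    exact (measurable_of_countable (fun p : ℕ × ℕ => p.1 - p.2)).comp
      ((hmtau (k + 1)).prodMk (hmtau k))
  have hXiCmeas : ∀ i k, Measurable (XiC X τ i k) := by
    intro i k
    have hG : ∀ N : ℕ, Measurable fun ω =>
        (Finset.range (N + 1)).sup' Finset.nonempty_range_add_one
          (fun j => |X (τ k ω + j) ω i - X (τ k ω) ω i|) := by
      intro N
      apply measurable_sup'_range
      intro j
      exact ((hXcompi (fun ω => τ k ω + j) i
        ((measurable_of_countable (fun m : ℕ => m + j)).comp (hmtau k))).sub
        (hXcompi (τ k) i (hmtau k))).abs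
    have h1 : Measurable fun p : Ω × ℕ =>
        (Finset.range (p.2 + 1)).sup' Finset.nonempty_range_add_one
          (fun j => |X (τ k p.1 + j) p.1 i - X (τ k p.1) p.1 i|) :=
      measurable_from_prod_countable_left fun N => hG N
    exact h1.comp (measurable_id.prodMk (hmreg k))
  have hYmeas : ∀ k, Measurable (Y k) := by
    intro k
    apply Measurable.mul
    · exact Finset.measurable_sum _ fun i _ => (hXiCmeas i k).pow_const 2
    · exact (measurable_of_countable (fun m : ℕ => (m : ℝ))).comp (hmreg k)
  have hYnonneg : ∀ k ω, 0 ≤ Y k ω :=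
    fun k ω => mul_nonneg (Finset.sum_nonneg fun i _ => sq_nonneg _) (Nat.cast_nonneg _)
  set F : ℕ × (ℕ → Fin d → ℝ) → ℝ := fun b =>
    (∑ i, ((Finset.range (b.1 + 1)).sup' Finset.nonempty_range_add_one (fun j => |b.2 j i|)) ^ 2)
      * b.1 with hF
  have hFmeas : Measurable F := by
    apply measurable_uncurry_nat
    intro N
    show Measurable fun p : (ℕ → Fin d → ℝ) =>
      (∑ i, ((Finset.range (N + 1)).sup' Finset.nonempty_range_add_one (fun j => |p j i|)) ^ 2)
        * (N : ℝ)
    apply Measurable.mul _ measurable_const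
    apply Finset.measurable_sum
    intro i _
    apply Measurable.pow_const
    exact measurable_sup'_range N (fun (j : ℕ) (p : ℕ → Fin d → ℝ) => |p j i|)
      (fun j => ((measurable_pi_apply i).comp (measurable_pi_apply j)).abs)
  have hblockmeas : ∀ k, Measurable (block X τ k) := by
    intro k
    refine Measurable.prodMk (hmreg k) ?_
    apply measurable_pi_lambda
    intro m
    apply Measurable.sub
    · apply hXcomp
      exact (measurable_of_countable (fun p : ℕ × ℕ => p.1 + min m p.2)).comp
        ((hmtau k).prodMk (hmreg k))
    · exact hXcomp _ (hmtau k)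
  have hYblock : ∀ k ω, Y k ω = F (block X τ k ω) := by
    intro k ω
    simp only [hY, hF, block]
    congr 1
    apply Finset.sum_congr rfl
    intro i _
    congr 1
    unfold XiC
    apply Finset.sup'_congr _ rfl
    intro j hj
    rw [Finset.mem_range] at hj
    rw [min_eq_left (by omega), Pi.sub_apply]
  have hYlint : ∀ k, 1 ≤ k → ∫⁻ ω, ENNReal.ofReal (Y k ω) ∂P
      = ∫⁻ ω, ENNReal.ofReal (Y 1 ω) ∂P := by
    intro k hk
    have hmap := (hident k hk).map_eq
    have h1 : ∫⁻ ω, ENNReal.ofReal (Y k ω) ∂P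
        = ∫⁻ b, ENNReal.ofReal (F b) ∂(P.map (block X τ k)) := by
      rw [lintegral_map hFmeas.ennreal_ofReal (hblockmeas k)]
      exact lintegral_congr fun ω => by rw [hYblock k ω]
    have h2 : ∫⁻ ω, ENNReal.ofReal (Y 1 ω) ∂P
        = ∫⁻ b, ENNReal.ofReal (F b) ∂(P.map (block X τ 1)) := by
      rw [lintegral_map hFmeas.ennreal_ofReal (hblockmeas 1)]
      exact lintegral_congr fun ω => by rw [hYblock 1 ω]
    rw [h1, h2, hmap]
  have hYint : ∀ k, k ∈ ({0, 1} : Set ℕ) → Integrable (Y k) P := by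
    intro k hk
    have heq : Y k = fun ω => ∑ i, (XiC X τ i k ω ^ 2 * (regInt τ k ω : ℝ)) := by
      funext ω; simp only [hY]; rw [Finset.sum_mul]
    rw [heq]
    apply integrable_finset_sum
    intro i _
    exact (hA i k hk 2 (by simp)).1
  set c0 := ∫⁻ ω, ENNReal.ofReal (Y 0 ω) ∂P with hc0d
  set c1 := ∫⁻ ω, ENNReal.ofReal (Y 1 ω) ∂P with hc1d
  have hc0fin : c0 ≠ ⊤ := (Integrable.lintegral_lt_top (hYint 0 (by simp))).ne
  have hc1fin : c1 ≠ ⊤ := (Integrable.lintegral_lt_top (hYint 1 (by simp))).ne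
  refine ⟨48 * c0 + 48 * ENNReal.ofReal T * c1, ?_, ?_⟩
  · refine ENNReal.add_ne_top.mpr ⟨ENNReal.mul_ne_top (by norm_num) hc0fin,
      ENNReal.mul_ne_top (ENNReal.mul_ne_top (by norm_num) ENNReal.ofReal_ne_top) hc1fin⟩
  intro n hn
  have hnR : (0 : ℝ) < n := by exact_mod_cast hn
  set N := ⌊(n : ℝ) * T⌋₊ with hNd
  have hrpow : ∀ s : ℝ≥0∞, (s ^ (2 : ℝ)⁻¹) ^ (2 : ℕ) = s := by
    intro s
    rw [← ENNReal.rpow_natCast (s ^ (2 : ℝ)⁻¹) 2, ← ENNReal.rpow_mul]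
    norm_num
  have hterm : ∀ (v : Fin d → ℝ), ((‖v‖₊ : ℝ≥0∞)) ^ (2 : ℝ) = ENNReal.ofReal (‖v‖ ^ 2) := by
    intro v
    rw [← enorm_eq_nnnorm, ← ofReal_norm, ENNReal.ofReal_rpow_of_nonneg (norm_nonneg v) (by norm_num)]
    norm_num
  have hpt : ∀ ω, (pVar 2 T (fun t => interp (fun k => X k ω) n t -
        (Real.sqrt n)⁻¹ • X (τ (κ ((n : ℝ) * t) ω) ω) ω)) ^ 2
      ≤ ENNReal.ofReal ((48 / n) * ∑ k ∈ Finset.range (N + 1), Y k ω) := by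
    intro ω
    unfold pVar
    rw [hrpow]
    apply iSup_le; intro m
    apply iSup_le; intro t
    apply iSup_le; intro hmono
    apply iSup_le; intro h0
    apply iSup_le; intro hm
    have hc : ∀ (i : Fin d) (k j : ℕ), τ k ω ≤ j → j ≤ τ (k + 1) ω →
        |X j ω i - X (τ k ω) ω i| ≤ XiC X τ i k ω := by
      intro i k j h1 h2
      have hj : j - τ k ω ∈ Finset.range (regInt τ k ω + 1) := by
        rw [Finset.mem_range]; unfold regInt; omega
      have heq : τ k ω + (j - τ k ω) = j := by omega
      calc |X j ω i - X (τ k ω) ω i|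
          = |X (τ k ω + (j - τ k ω)) ω i - X (τ k ω) ω i| := by rw [heq]
        _ ≤ XiC X τ i k ω := by
            unfold XiC
            exact Finset.le_sup' (fun k' => |X (τ k ω + k') ω i - X (τ k ω) ω i|) hj
    refine le_trans (le_of_eq ?_) (ENNReal.ofReal_le_ofReal
      (det_bound (fun j => X j ω) (fun k => τ k ω) (fun u => κ u ω) (htau0 ω) (htaumono ω)
        (fun u hu => hκ u hu ω) (fun i k => XiC X τ i k ω) hc n hn T hT.le m t hmono h0 hm))
    rw [ENNReal.ofReal_sum_of_nonneg (fun i _ => sq_nonneg _)]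
    exact Finset.sum_congr rfl fun i _ => hterm _
  calc ∫⁻ ω, (pVar 2 T (fun t => interp (fun k => X k ω) n t -
        (Real.sqrt n)⁻¹ • X (τ (κ ((n : ℝ) * t) ω) ω) ω)) ^ 2 ∂P
      ≤ ∫⁻ ω, ENNReal.ofReal ((48 / n) * ∑ k ∈ Finset.range (N + 1), Y k ω) ∂P :=
        lintegral_mono hpt
    _ = ENNReal.ofReal (48 / n) * ∑ k ∈ Finset.range (N + 1),
          ∫⁻ ω, ENNReal.ofReal (Y k ω) ∂P := by
        have hsplit : ∀ ω, ENNReal.ofReal ((48 / n) * ∑ k ∈ Finset.range (N + 1), Y k ω)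
            = ENNReal.ofReal (48 / (n : ℝ)) *
                ∑ k ∈ Finset.range (N + 1), ENNReal.ofReal (Y k ω) := by
          intro ω
          rw [ENNReal.ofReal_mul (by positivity),
            ENNReal.ofReal_sum_of_nonneg (fun k _ => hYnonneg k ω)]
        simp_rw [hsplit]
        rw [lintegral_const_mul' _ _ ENNReal.ofReal_ne_top]
        congr 1
        exact lintegral_finset_sum _ fun k _ => (hYmeas k).ennreal_ofReal
    _ = ENNReal.ofReal (48 / n) * (c0 + (N : ℝ≥0∞) * c1) := by
        congr 1
        rw [Finset.sum_range_succ']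
        have hrepl : ∀ i ∈ Finset.range N, ∫⁻ ω, ENNReal.ofReal (Y (i + 1) ω) ∂P = c1 :=
          fun i _ => hYlint (i + 1) (by omega)
        rw [Finset.sum_congr rfl hrepl, Finset.sum_const, Finset.card_range, ← hc0d,
          nsmul_eq_mul]
        ring
    _ ≤ 48 * c0 + 48 * ENNReal.ofReal T * c1 := by
        have hn' : (1 : ℝ) ≤ n := by exact_mod_cast hn
        have h48 : ENNReal.ofReal (48 / n) ≤ 48 := by
          rw [show (48 : ℝ≥0∞) = ENNReal.ofReal 48 from (ENNReal.ofReal_ofNat 48).symm]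
          apply ENNReal.ofReal_le_ofReal
          rw [div_le_iff₀ hnR]
          nlinarith
        rw [mul_add]
        apply add_le_add
        · exact mul_le_mul_left h48 c0
        · rw [← mul_assoc]
          apply mul_le_mul_left _ c1
          have heq2 : ENNReal.ofReal (48 / n) * (N : ℝ≥0∞)
              = ENNReal.ofReal ((48 / n) * N) := by
            rw [ENNReal.ofReal_mul (by positivity), ENNReal.ofReal_natCast]
          rw [heq2]
          have hfl : (N : ℝ) ≤ (n : ℝ) * T := Nat.floor_le (by positivity)
          have h2 : (48 / (n : ℝ)) * N ≤ 48 * T := by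
            rw [div_mul_eq_mul_div, div_le_iff₀ hnR]
            nlinarith
          calc ENNReal.ofReal ((48 / n) * N) ≤ ENNReal.ofReal (48 * T) :=
                ENNReal.ofReal_le_ofReal h2
            _ = 48 * ENNReal.ofReal T := by
                rw [ENNReal.ofReal_mul (by norm_num), ENNReal.ofReal_ofNat]

end
end
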